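/- arXiv:2101.01966 — 2 statements merged into one kernel-verified Lean document; each statement's English description precedes it below -/
import Mathlib

section
/- Let (V, {Mₙ(V)⁺}, {|·|_{m,n}}) be an absolutely matrix ordered space and let (𝔙, 𝔙⁺) be its matricial inductive limit with embeddings Tₙ : Mₙ(V) → 𝔙. Define |𝔳| := T_{o(𝔳)}(|T_{o(𝔳)}⁻¹(𝔳)|) for 𝔳 ∈ 𝔙. Then (𝔙, 𝔙⁺, |·|) is a non-degenerate absolutely ordered 𝔉-bimodule; in particular, if 𝔲 and 𝔳 are 𝔉-independent then |𝔲 + 𝔳| = |𝔲| + |𝔳|. -/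
noncomputable section

open scoped Matrix.Norms.L2Operator

/-! ### The *-algebra 𝔉 of ∞×∞ complex matrices with finitely many nonzero entries -/

/-- `∞ × ∞` complex matrices (indexed by `ℕ × ℕ`). -/
abbrev FMat := ℕ → ℕ → ℂ

/-- The matrix has (at most) finitely many nonzero entries: it is supported in some
`n × n` top-left block. -/
def IsFin (a : FMat) : Prop := ∃ n, ∀ i j, (n ≤ i ∨ n ≤ j) → a i j = 0

/-- Matrix multiplication in `𝔉` (the `tsum` is a finite sum for finitely supported
matrices). -/
def fmul (a b : FMat) : FMat := fun i k => ∑' j, a i j * b j k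

/-- The involution (conjugate transpose) on `𝔉`. -/
def fstar (a : FMat) : FMat := fun i j => starRingEnd ℂ (a j i)

/-- The matrix unit `𝔢_{i,j}`. -/
def eUnit (i j : ℕ) : FMat := fun k l => if k = i ∧ l = j then 1 else 0

/-- `𝔍ₙ = Σ_{i<n} 𝔢_{i,i}`, the partial identities. -/
def JMat (n : ℕ) : FMat := fun k l => if k = l ∧ k < n then 1 else 0

/-- `𝔎ₙ = Σ_{i<n} 𝔢_{i,n+i}`, used for `2×2`-block constructions. -/
def KMat (n : ℕ) : FMat := fun k l => if l = k + n ∧ k < n then 1 else 0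

/-- The diagonal idempotent `Σ_{i ∈ s} 𝔢_{i,i}` associated to a finite set `s ⊂ ℕ`. -/
def finsetDiag (s : Finset ℕ) : FMat := fun k l => if k = l ∧ k ∈ s then 1 else 0

/-- The operator norm on `𝔉`: the supremum of the (C*-algebra) operator norms of the
finite top-left blocks (for a finitely supported matrix the blocks stabilize). -/
def fnorm (a : FMat) : ℝ :=
  ⨆ n : ℕ, ‖(Matrix.of fun i j : Fin n => a i j : Matrix (Fin n) (Fin n) ℂ)‖

/-- The order `o(𝔞)` of a finitely supported matrix: the least `n` such that `𝔞` is
supported in the top-left `n × n` block. -/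
def matOrd (a : FMat) : ℕ := sInf {n | ∀ i j, (n ≤ i ∨ n ≤ j) → a i j = 0}

/-- A local unitary in `𝔉`: `𝔞*𝔞 = 𝔍_{o(𝔞)} = 𝔞𝔞*`. -/
def IsLocalUnitary (a : FMat) : Prop :=
  IsFin a ∧ fmul (fstar a) a = JMat (matOrd a) ∧ fmul a (fstar a) = JMat (matOrd a)

/-! ### Non-degenerate *-𝔉-bimodules -/

/-- A non-degenerate `*`-`𝔉`-bimodule structure on a complex vector space `V`:
left and right actions of (finitely supported) infinite matrices together with an
involution, compatible with each other and with the complex scalars, such that every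
element is `𝔍ₙ·v·𝔍ₙ` for some `n`. -/
structure FBimod (V : Type*) [AddCommGroup V] [Module ℂ V] where
  lsmul : FMat → V → V
  rsmul : V → FMat → V
  star : V → V
  lsmul_add : ∀ a u v, lsmul a (u + v) = lsmul a u + lsmul a v
  rsmul_add : ∀ u v b, rsmul (u + v) b = rsmul u b + rsmul v b
  add_lsmul : ∀ a b v, IsFin a → IsFin b → lsmul (a + b) v = lsmul a v + lsmul b v
  rsmul_add' : ∀ v a b, IsFin a → IsFin b → rsmul v (a + b) = rsmul v a + rsmul v b
  smul_lsmul : ∀ (c : ℂ) a v, IsFin a → lsmul (c • a) v = c • lsmul a v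
  smul_rsmul : ∀ (c : ℂ) v a, IsFin a → rsmul v (c • a) = c • rsmul v a
  mul_lsmul : ∀ a b v, IsFin a → IsFin b → lsmul (fmul a b) v = lsmul a (lsmul b v)
  rsmul_mul : ∀ v a b, IsFin a → IsFin b → rsmul v (fmul a b) = rsmul (rsmul v a) b
  lsmul_rsmul : ∀ a v b, IsFin a → IsFin b → rsmul (lsmul a v) b = lsmul a (rsmul v b)
  star_add : ∀ u v, star (u + v) = star u + star v
  star_star : ∀ v, star (star v) = v
  star_lsmul : ∀ a v, IsFin a → star (lsmul a v) = rsmul (star v) (fstar a)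
  star_rsmul : ∀ v a, IsFin a → star (rsmul v a) = lsmul (fstar a) (star v)
  smul_compat : ∀ (c : ℂ) (n : ℕ) v, lsmul (JMat n) (rsmul v (JMat n)) = v →
    lsmul (c • JMat n) v = c • v
  nondeg : ∀ v, ∃ n, lsmul (JMat n) (rsmul v (JMat n)) = v

namespace FBimod

variable {V : Type*} [AddCommGroup V] [Module ℂ V] (M : FBimod V)

/-- `𝔍ₙ 𝔳 𝔍ₙ`. -/
def cut (n : ℕ) (v : V) : V := M.lsmul (JMat n) (M.rsmul v (JMat n))

/-- The order `o(𝔳)`: the smallest `n` with `𝔍ₙ 𝔳 𝔍ₙ = 𝔳`. -/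
def ord (v : V) : ℕ := sInf {n | M.cut n v = v}

/-- `𝔞* 𝔳 𝔞`. -/
def conj (a : FMat) (v : V) : V := M.lsmul (fstar a) (M.rsmul v a)

/-- `C` is a bimodule cone: consists of self-adjoint elements, is closed under
addition and under `𝔳 ↦ 𝔞*𝔳𝔞` for `𝔞 ∈ 𝔉`. -/
def IsCone (C : Set V) : Prop :=
  (∀ v ∈ C, M.star v = v) ∧ (∀ u ∈ C, ∀ v ∈ C, u + v ∈ C) ∧
    (∀ v ∈ C, ∀ a : FMat, IsFin a → M.conj a v ∈ C)

/-- The cone `C` is proper: `C ∩ (−C) = {0}`. -/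
def ConeProper (C : Set V) : Prop := ∀ v ∈ C, -v ∈ C → v = 0

/-- The cone `C` is Archimedean. -/
def ConeArch (C : Set V) : Prop :=
  ∀ u ∈ C, ∀ v : V, M.star v = v → (∀ k : ℝ, 0 < k → (k : ℂ) • u + v ∈ C) → v ∈ C

/-- The cone `C` is generating. -/
def ConeGen (C : Set V) : Prop :=
  ∀ v : V, ∃ v₀ ∈ C, ∃ v₁ ∈ C, ∃ v₂ ∈ C, ∃ v₃ ∈ C,
    v = v₀ + Complex.I • v₁ - v₂ - Complex.I • v₃

/-- `(𝔳₁, 𝔳₂)ₙ⁺ = 𝔳₁ + 𝔎ₙ* 𝔳₂ 𝔎ₙ` (the diagonal `2×2`-block `diag(𝔳₁,𝔳₂)`). -/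
def pairPlus (n : ℕ) (v₁ v₂ : V) : V :=
  v₁ + M.lsmul (fstar (KMat n)) (M.rsmul v₂ (KMat n))

/-- `saₙ(𝔳) = 𝔍ₙ 𝔳 𝔎ₙ + 𝔎ₙ* 𝔳* 𝔍ₙ` (the off-diagonal `2×2`-block of `𝔳`). -/
def san (n : ℕ) (v : V) : V :=
  M.lsmul (JMat n) (M.rsmul v (KMat n)) +
    M.lsmul (fstar (KMat n)) (M.rsmul (M.star v) (JMat n))

/-- `𝔲` and `𝔳` are `𝔉`-independent: compressed onto disjoint diagonal blocks. -/
def FIndep (u v : V) : Prop :=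
  ∃ I J : Finset ℕ, Disjoint I J ∧
    M.lsmul (finsetDiag I) (M.rsmul u (finsetDiag I)) = u ∧
    M.lsmul (finsetDiag J) (M.rsmul v (finsetDiag J)) = v

/-- `(𝔙, C, abs)` is a non-degenerate absolutely ordered `𝔉`-bimodule
(Definition 18 of the paper). -/
structure IsAbsOrd (C : Set V) (abs : V → V) : Prop where
  cone : M.IsCone C
  abs_mem : ∀ v, abs v ∈ C
  ord_abs_le : ∀ v, M.ord (abs v) ≤ M.ord v
  abs_of_mem : ∀ v ∈ C, abs v = v
  pos_part : ∀ v, M.pairPlus (M.ord v) (abs (M.star v)) (abs v) + M.san (M.ord v) v ∈ C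
  abs_smul_le : ∀ (a b : FMat), IsFin a → IsFin b → ∀ v,
    (fnorm a : ℂ) • abs (M.rsmul (abs v) b) - abs (M.lsmul a (M.rsmul v b)) ∈ C
  indep_add : ∀ u v, M.FIndep u v → abs (u + v) = abs u + abs v
  absorb : ∀ u ∈ C, ∀ v ∈ C, ∀ w ∈ C, abs (u - v) = u + v → v - w ∈ C →
    abs (u - w) = u + w
  ortho_pm : ∀ u ∈ C, ∀ v ∈ C, ∀ w ∈ C, abs (u - v) = u + v → abs (u - w) = u + w →
    abs (u - abs (v + w)) = u + abs (v + w) ∧ abs (u - abs (v - w)) = u + abs (v - w)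

/-- `eⁿ = Σ_{i<n} 𝔢_{i,0} 𝔢 𝔢_{0,i}` for an element `𝔢` of order `1`. -/
def epow (e : V) (n : ℕ) : V :=
  ∑ i ∈ Finset.range n, M.lsmul (eUnit i 0) (M.rsmul e (eUnit 0 i))

/-- `𝔢` is a local order unit for `(𝔙, C)`. -/
def IsLocalOrderUnit (C : Set V) (e : V) : Prop :=
  e ∈ C ∧ M.cut 1 e = e ∧ ∀ v : V, M.cut 1 v = v → ∃ k : ℝ, 0 < k ∧
    M.pairPlus 1 ((k : ℂ) • e) ((k : ℂ) • e) + M.san 1 v ∈ C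

/-- `(𝔙, C, 𝔢)` is a local `𝔉`-order unit bimodule. -/
def IsLocalUnitBimod (C : Set V) (e : V) : Prop :=
  M.IsCone C ∧ ConeProper C ∧ M.ConeArch C ∧ M.IsLocalOrderUnit C e

/-- The norm associated to a local order unit:
`‖𝔳‖ = inf { k > 0 : (k𝔢^{o(𝔳)}, k𝔢^{o(𝔳)})⁺_{o(𝔳)} + sa_{o(𝔳)}(𝔳) ∈ C }`. -/
def lnorm (C : Set V) (e : V) (v : V) : ℝ :=
  sInf {k : ℝ | 0 < k ∧
    M.pairPlus (M.ord v) ((k : ℂ) • M.epow e (M.ord v)) ((k : ℂ) • M.epow e (M.ord v)) +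
      M.san (M.ord v) v ∈ C}

/-- `𝔲 ⊥_∞ 𝔳` with respect to the local-order-unit norm. -/
def PerpInf (C : Set V) (e : V) (u v : V) : Prop :=
  ∀ k₁ k₂ : ℝ, M.lnorm C e ((k₁ : ℂ) • u + (k₂ : ℂ) • v) =
    max (M.lnorm C e ((k₁ : ℂ) • u)) (M.lnorm C e ((k₂ : ℂ) • v))

end FBimod
/-! ### Matrices over a complex *-vector space -/

section MatrixLevel

variable {V : Type*} [AddCommGroup V] [Module ℂ V] [StarAddMonoid V] [StarModule ℂ V]

/-- Conjugate transpose of a rectangular matrix over a `*`-vector space. -/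
def mstar {m n : ℕ} (v : Matrix (Fin m) (Fin n) V) : Matrix (Fin n) (Fin m) V :=
  fun i j => star (v j i)

/-- Left action of a scalar matrix: `(a v)_{ij} = Σ_k a_{ik} v_{kj}`. -/
def aSmul {r m n : ℕ} (a : Matrix (Fin r) (Fin m) ℂ) (v : Matrix (Fin m) (Fin n) V) :
    Matrix (Fin r) (Fin n) V :=
  fun i j => ∑ k, a i k • v k j

/-- Right action of a scalar matrix: `(v b)_{ij} = Σ_k b_{kj} • v_{ik}`. -/
def smulB {m n s : ℕ} (v : Matrix (Fin m) (Fin n) V) (b : Matrix (Fin n) (Fin s) ℂ) :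
    Matrix (Fin m) (Fin s) V :=
  fun i j => ∑ k, b k j • v i k

/-- Direct sum (block diagonal) of rectangular matrices over `V`. -/
def dsum {m n r s : ℕ} (v : Matrix (Fin m) (Fin n) V) (w : Matrix (Fin r) (Fin s) V) :
    Matrix (Fin (m + r)) (Fin (n + s)) V :=
  fun i j =>
    if hi : (i : ℕ) < m then
      (if hj : (j : ℕ) < n then v ⟨i, hi⟩ ⟨j, hj⟩ else 0)
    else
      (if hj : (j : ℕ) < n then 0
       else w ⟨(i : ℕ) - m, by have := i.isLt; omega⟩ ⟨(j : ℕ) - n, by have := j.isLt; omega⟩)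

end MatrixLevel

/-- The L2-operator norm of a rectangular complex scalar matrix. -/
def cnorm {r m : ℕ} (a : Matrix (Fin r) (Fin m) ℂ) : ℝ := ‖a‖

/-- Embedding of a finite rectangular complex matrix into `𝔉`. -/
def embC {r m : ℕ} (a : Matrix (Fin r) (Fin m) ℂ) : FMat :=
  fun i j => if hi : i < r then (if hj : j < m then a ⟨i, hi⟩ ⟨j, hj⟩ else 0) else 0

/-- `e ⊕ ⋯ ⊕ e`: the diagonal matrix with constant diagonal `e`. -/
def diagE {V : Type*} [AddCommGroup V] (e : V) (n : ℕ) : Matrix (Fin n) (Fin n) V :=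
  Matrix.of fun i j => if i = j then e else 0

/-! ### Absolutely matrix ordered spaces and absolute matrix order unit spaces -/

/-- An absolutely matrix ordered space structure on a complex `*`-vector space `V`:
matrix cones `Mₙ(V)⁺` and absolute values `|·|_{m,n} : M_{m,n}(V) → Mₙ(V)⁺`
(Definition 4.1 of Karn-Kumar). -/
structure AMOS (V : Type*) [AddCommGroup V] [Module ℂ V] [StarAddMonoid V]
    [StarModule ℂ V] where
  pos : ∀ n : ℕ, Set (Matrix (Fin n) (Fin n) V)
  abs : ∀ m n : ℕ, Matrix (Fin m) (Fin n) V → Matrix (Fin n) (Fin n) V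
  pos_star : ∀ n, ∀ v ∈ pos n, mstar v = v
  pos_add : ∀ n, ∀ u ∈ pos n, ∀ v ∈ pos n, u + v ∈ pos n
  pos_conj : ∀ m n (a : Matrix (Fin n) (Fin m) ℂ), ∀ v ∈ pos n,
    aSmul a.conjTranspose (smulB v a) ∈ pos m
  abs_mem : ∀ m n v, abs m n v ∈ pos n
  abs_of_pos : ∀ n, ∀ v ∈ pos n, abs n n v = v
  abs_add_self : ∀ n (v : Matrix (Fin n) (Fin n) V), mstar v = v →
    abs n n v + v ∈ pos n ∧ abs n n v - v ∈ pos n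
  abs_real_smul : ∀ n (k : ℝ) (v : Matrix (Fin n) (Fin n) V), mstar v = v →
    abs n n ((k : ℂ) • v) = ((|k| : ℝ) : ℂ) • abs n n v
  absorb : ∀ n, ∀ u ∈ pos n, ∀ v ∈ pos n, ∀ w ∈ pos n,
    abs n n (u - v) = u + v → v - w ∈ pos n → abs n n (u - w) = u + w
  ortho_pm : ∀ n, ∀ u ∈ pos n, ∀ v ∈ pos n, ∀ w ∈ pos n,
    abs n n (u - v) = u + v → abs n n (u - w) = u + w →
    abs n n (u - abs n n (v + w)) = u + abs n n (v + w) ∧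
      abs n n (u - abs n n (v - w)) = u + abs n n (v - w)
  abs_smul_le : ∀ (r m n s : ℕ) (α : Matrix (Fin r) (Fin m) ℂ)
    (v : Matrix (Fin m) (Fin n) V) (β : Matrix (Fin n) (Fin s) ℂ),
    (cnorm α : ℂ) • abs n s (smulB (abs m n v) β) - abs r s (aSmul α (smulB v β)) ∈ pos s
  abs_dsum : ∀ (m n r s : ℕ) (v : Matrix (Fin m) (Fin n) V) (w : Matrix (Fin r) (Fin s) V),
    abs (m + r) (n + s) (dsum v w) = dsum (abs m n v) (abs r s w)

/-- A matrix order unit structure on top of an absolutely matrix ordered space: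
an order unit `e` with `V⁺` proper and each `Mₙ(V)⁺` Archimedean. -/
structure AMOUS (V : Type*) [AddCommGroup V] [Module ℂ V] [StarAddMonoid V]
    [StarModule ℂ V] extends AMOS V where
  e : V
  e_pos : diagE e 1 ∈ pos 1
  proper : ∀ v ∈ pos 1, -v ∈ pos 1 → v = 0
  arch : ∀ n (v : Matrix (Fin n) (Fin n) V), mstar v = v →
    (∀ k : ℝ, 0 < k → (k : ℂ) • diagE e n + v ∈ pos n) →
    v ∈ pos n
  unit : ∀ n (v : Matrix (Fin n) (Fin n) V), mstar v = v →
    ∃ k : ℝ, 0 < k ∧ (k : ℂ) • diagE e n - v ∈ pos n ∧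
      (k : ℂ) • diagE e n + v ∈ pos n

namespace AMOUS

variable {V : Type*} [AddCommGroup V] [Module ℂ V] [StarAddMonoid V] [StarModule ℂ V]
variable (A : AMOUS V)

/-- `eⁿ = e ⊕ ⋯ ⊕ e ∈ Mₙ(V)`. -/
def eN (n : ℕ) : Matrix (Fin n) (Fin n) V := diagE A.e n

/-- The `2n × 2n` matrix `[[a, b], [c, d]]` of `n × n` blocks. -/
def block2 {n : ℕ} (a b c d : Matrix (Fin n) (Fin n) V) :
    Matrix (Fin (n + n)) (Fin (n + n)) V :=
  fun i j =>
    if hi : (i : ℕ) < n then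
      (if hj : (j : ℕ) < n then a ⟨i, hi⟩ ⟨j, hj⟩
       else b ⟨i, hi⟩ ⟨(j : ℕ) - n, by have := j.isLt; omega⟩)
    else
      (if hj : (j : ℕ) < n then c ⟨(i : ℕ) - n, by have := i.isLt; omega⟩ ⟨j, hj⟩
       else d ⟨(i : ℕ) - n, by have := i.isLt; omega⟩ ⟨(j : ℕ) - n, by have := j.isLt; omega⟩)

end AMOUS
namespace AMOUS

variable {V : Type*} [AddCommGroup V] [Module ℂ V] [StarAddMonoid V] [StarModule ℂ V]
variable (A : AMOUS V)

/-- The matrix norms of a matrix order unit space: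
`‖v‖ₙ = inf { k > 0 : [[k eⁿ, v], [v*, k eⁿ]] ∈ M₂ₙ(V)⁺ }`. -/
def mnorm (n : ℕ) (v : Matrix (Fin n) (Fin n) V) : ℝ :=
  sInf {k : ℝ | 0 < k ∧
    block2 ((k : ℂ) • A.eN n) v (mstar v) ((k : ℂ) • A.eN n) ∈ A.pos (n + n)}

/-- Orthogonality `u ⊥ v` (for positive elements): `|u − v| = u + v`. -/
def Perp {n : ℕ} (u v : Matrix (Fin n) (Fin n) V) : Prop :=
  A.abs n n (u - v) = u + v

/-- `u ⊥_∞ v`: `‖k₁ u + k₂ v‖ = max {‖k₁ u‖, ‖k₂ v‖}` for all real `k₁, k₂`. -/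
def PerpInfM {n : ℕ} (u v : Matrix (Fin n) (Fin n) V) : Prop :=
  ∀ k₁ k₂ : ℝ, A.mnorm n ((k₁ : ℂ) • u + (k₂ : ℂ) • v) =
    max (A.mnorm n ((k₁ : ℂ) • u)) (A.mnorm n ((k₂ : ℂ) • v))

/-- `u ⊥_∞^a v`: absolute `∞`-orthogonality. -/
def PerpInfA {n : ℕ} (u v : Matrix (Fin n) (Fin n) V) : Prop :=
  ∀ u₁ ∈ A.pos n, ∀ v₁ ∈ A.pos n, u - u₁ ∈ A.pos n → v - v₁ ∈ A.pos n → A.PerpInfM u₁ v₁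

/-- `(V, {Mₙ(V)⁺}, {|·|}, e)` is an absolute matrix order unit space:
`⊥ = ⊥_∞^a` on each `Mₙ(V)⁺`. -/
def IsAbsolute : Prop :=
  ∀ n, ∀ u ∈ A.pos n, ∀ v ∈ A.pos n, (A.Perp u v ↔ A.PerpInfA u v)

/-- `p` is an order projection in `Mₙ(V)`: `p* = p` and `|2p − eⁿ| = eⁿ`. -/
def IsOP (n : ℕ) (p : Matrix (Fin n) (Fin n) V) : Prop :=
  mstar p = p ∧ A.abs n n ((2 : ℂ) • p - A.eN n) = A.eN n

/-- `v ∈ M_{m,n}(V)` is a partial isometry: `|v|` and `|v*|` are order projections. -/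
def IsPI {m n : ℕ} (v : Matrix (Fin m) (Fin n) V) : Prop :=
  A.IsOP n (A.abs m n v) ∧ A.IsOP m (A.abs n m (mstar v))

end AMOUS

/-- An element of `M_∞(V)`: a matrix at some level `n`. -/
def OPE (V : Type*) : Type _ := Σ n : ℕ, Matrix (Fin n) (Fin n) V

namespace OPE

variable {V : Type*} [AddCommGroup V] [Module ℂ V] [StarAddMonoid V] [StarModule ℂ V]

/-- Direct sum in `M_∞(V)`. -/
def d (p q : OPE V) : OPE V := ⟨p.1 + q.1, dsum p.2 q.2⟩

/-- The zero order projection (at level 1). -/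
def zero (V : Type*) [AddCommGroup V] : OPE V := ⟨1, 0⟩

end OPE

namespace AMOUS

variable {V : Type*} [AddCommGroup V] [Module ℂ V] [StarAddMonoid V] [StarModule ℂ V]
variable (A : AMOUS V)

/-- Membership in `𝒪𝒫_∞(V)`. -/
def IsOPE (p : OPE V) : Prop := A.IsOP p.1 p.2

/-- `eⁿ` as an element of `𝒪𝒫_∞(V)`. -/
def eOPE (n : ℕ) : OPE V := ⟨n, A.eN n⟩

/-- Partial isometric equivalence `p ∼ q` of order projections: there is a partial
isometry `v` with `p = |v*|` and `q = |v|`. -/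
def Sim (p q : OPE V) : Prop :=
  ∃ v : Matrix (Fin p.1) (Fin q.1) V,
    A.IsPI v ∧ p.2 = A.abs q.1 p.1 (mstar v) ∧ q.2 = A.abs p.1 q.1 v

/-- Condition (T). -/
def CondT : Prop :=
  ∀ (m n l : ℕ) (u : Matrix (Fin m) (Fin n) V) (v : Matrix (Fin l) (Fin n) V),
    A.IsPI u → A.IsPI v → A.abs m n u = A.abs l n v →
    ∃ w : Matrix (Fin m) (Fin l) V, A.IsPI w ∧
      A.abs l m (mstar w) = A.abs n m (mstar u) ∧ A.abs m l w = A.abs n l (mstar v)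

/-- Stabilized equivalence `p ≈ q`: `p ⊕ r ∼ q ⊕ r` for some order projection `r`. -/
def ASim (p q : OPE V) : Prop := ∃ r : OPE V, A.IsOPE r ∧ A.Sim (p.d r) (q.d r)

/-- A pair of order projections, representing an element `[(p,q)]` of `K₀(V)`. -/
def IsOPPair (x : OPE V × OPE V) : Prop := A.IsOPE x.1 ∧ A.IsOPE x.2

/-- The relation `(p₁,q₁) ≡ (p₂,q₂) ↔ p₁ ⊕ q₂ ≈ p₂ ⊕ q₁` defining `K₀(V)`. -/
def Krel (x y : OPE V × OPE V) : Prop := A.ASim (x.1.d y.2) (y.1.d x.2)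

/-- Addition of representatives of `K₀(V)` classes. -/
def kadd (x y : OPE V × OPE V) : OPE V × OPE V := (x.1.d y.1, x.2.d y.2)

/-- The representative of the zero class of `K₀(V)`. -/
def kzero : OPE V × OPE V := (OPE.zero V, OPE.zero V)

/-- Representative-level membership in the cone `K₀(V)⁺ = {[(p,0)] : p ∈ 𝒪𝒫_∞(V)}`. -/
def KPos (x : OPE V × OPE V) : Prop :=
  ∃ p : OPE V, A.IsOPE p ∧ A.Krel x (p, OPE.zero V)

/-- Representative-level order `[x] ≤ [y]` in `K₀(V)`: `[y] − [x] ∈ K₀(V)⁺`. -/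
def Kle (x y : OPE V × OPE V) : Prop :=
  ∃ r : OPE V, A.IsOPE r ∧ A.Krel (kadd x (r, OPE.zero V)) y

/-- The order projection `p ∈ Mₙ(V)` is finite: `q ∼ p` and `q ≥ p` imply `q = p`. -/
def FiniteOP (n : ℕ) (p : Matrix (Fin n) (Fin n) V) : Prop :=
  ∀ q : Matrix (Fin n) (Fin n) V, A.IsOP n q → A.Sim ⟨n, q⟩ ⟨n, p⟩ →
    q - p ∈ A.pos n → q = p

end AMOUS

/-! ### Maps between absolute matrix order unit spaces -/

section Maps

variable {V W : Type*} [AddCommGroup V] [Module ℂ V] [StarAddMonoid V] [StarModule ℂ V]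
  [AddCommGroup W] [Module ℂ W] [StarAddMonoid W] [StarModule ℂ W]

/-- The amplification `φₙ` (entrywise application) of a map. -/
def mmap (φ : V →ₗ[ℂ] W) {m n : ℕ} (v : Matrix (Fin m) (Fin n) V) :
    Matrix (Fin m) (Fin n) W :=
  fun i j => φ (v i j)

/-- `φ` is completely `|·|`-preserving: every amplification `φₙ` is `|·|`-preserving. -/
def CAbsPres (A : AMOUS V) (B : AMOUS W) (φ : V →ₗ[ℂ] W) : Prop :=
  ∀ (n : ℕ) (v : Matrix (Fin n) (Fin n) V), B.abs n n (mmap φ v) = mmap φ (A.abs n n v)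

/-- `φ` and `ψ` are completely orthogonal: `φₙ(u) ⊥ ψₙ(v)` for all positive `u, v`. -/
def COrth (A : AMOUS V) (B : AMOUS W) (φ ψ : V →ₗ[ℂ] W) : Prop :=
  ∀ (n : ℕ) (u v : Matrix (Fin n) (Fin n) V), u ∈ A.pos n → v ∈ A.pos n →
    B.Perp (mmap φ u) (mmap ψ v)

/-- The image of an element of `M_∞(V)` under (the amplifications of) `φ`. -/
def mmapOPE (φ : V →ₗ[ℂ] W) (p : OPE V) : OPE W := ⟨p.1, mmap φ p.2⟩

/-- `F` represents a group homomorphism `K₀(V) → K₀(W)` making the `K₀` diagram of `φ`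
commute: it maps `K₀`-representatives to `K₀`-representatives, respects the defining
relation `≡`, is additive, and satisfies `F([(p, 0)]) = [(φ(p), 0)]`. -/
def K0HomProp (A : AMOUS V) (B : AMOUS W) (φ : V →ₗ[ℂ] W)
    (F : OPE V × OPE V → OPE W × OPE W) : Prop :=
  (∀ x, A.IsOPPair x → B.IsOPPair (F x)) ∧
  (∀ x y, A.IsOPPair x → A.IsOPPair y → A.Krel x y → B.Krel (F x) (F y)) ∧
  (∀ x y, A.IsOPPair x → A.IsOPPair y → B.Krel (F (AMOUS.kadd x y)) (AMOUS.kadd (F x) (F y))) ∧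
  (∀ p : OPE V, A.IsOPE p → B.Krel (F (p, OPE.zero V)) (mmapOPE φ p, OPE.zero W))

/-- The completely bounded norm of `φ` with respect to the order unit matrix norms. -/
def cbNorm (A : AMOUS V) (B : AMOUS W) (φ : V →ₗ[ℂ] W) : ℝ :=
  ⨆ n : ℕ, sInf {c : ℝ | 0 ≤ c ∧
    ∀ v : Matrix (Fin n) (Fin n) V, B.mnorm n (mmap φ v) ≤ c * A.mnorm n v}

end Maps
/-! ### Matricial inductive limits -/

/-- `(𝕍, M)` together with the embeddings `Tₙ : Mₙ(V) → 𝕍` is the matricial inductive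
(direct) limit of the matrix levels of `V`: the `Tₙ` are injective `*`-linear maps,
compatible with the inclusions `v ↦ v ⊕ 0`, with image `𝔍ₙ 𝕍 𝔍ₙ`, intertwining the
scalar matrix actions with the `𝔉`-bimodule actions. -/
structure IsMatLimit (V : Type*) [AddCommGroup V] [Module ℂ V] [StarAddMonoid V]
    [StarModule ℂ V] {𝕍 : Type*} [AddCommGroup 𝕍] [Module ℂ 𝕍] (M : FBimod 𝕍)
    (T : ∀ n : ℕ, Matrix (Fin n) (Fin n) V → 𝕍) : Prop where
  map_add : ∀ n u v, T n (u + v) = T n u + T n v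
  map_smul : ∀ n (c : ℂ) v, T n (c • v) = c • T n v
  inj : ∀ n, Function.Injective (T n)
  map_star : ∀ n v, M.star (T n v) = T n (mstar v)
  embed : ∀ (n m : ℕ) (v : Matrix (Fin n) (Fin n) V),
    T (n + m) (dsum v (0 : Matrix (Fin m) (Fin m) V)) = T n v
  range : ∀ (n : ℕ) (x : 𝕍), M.cut n x = x → ∃ v, T n v = x
  cutT : ∀ n v, M.cut n (T n v) = T n v
  act : ∀ (n : ℕ) (a b : Matrix (Fin n) (Fin n) ℂ) (v : Matrix (Fin n) (Fin n) V),
    T n (aSmul a (smulB v b)) = M.lsmul (embC a) (M.rsmul (T n v) (embC b))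

/-- The axioms of an absolutely matrix ordered space `(V, {Mₙ(V)⁺}, {|·|ₙ})`,
formulated for the square levels. -/
structure IsAbsMatOrderedSq {V : Type*} [AddCommGroup V] [Module ℂ V] [StarAddMonoid V]
    [StarModule ℂ V] (pos : ∀ n : ℕ, Set (Matrix (Fin n) (Fin n) V))
    (abs : ∀ n : ℕ, Matrix (Fin n) (Fin n) V → Matrix (Fin n) (Fin n) V) : Prop where
  pos_star : ∀ n, ∀ v ∈ pos n, mstar v = v
  pos_add : ∀ n, ∀ u ∈ pos n, ∀ v ∈ pos n, u + v ∈ pos n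
  pos_conj : ∀ m n (a : Matrix (Fin n) (Fin m) ℂ), ∀ v ∈ pos n,
    aSmul a.conjTranspose (smulB v a) ∈ pos m
  abs_mem : ∀ n v, abs n v ∈ pos n
  abs_of_pos : ∀ n, ∀ v ∈ pos n, abs n v = v
  abs_add_self : ∀ n (v : Matrix (Fin n) (Fin n) V), mstar v = v →
    abs n v + v ∈ pos n ∧ abs n v - v ∈ pos n
  abs_real_smul : ∀ n (k : ℝ) (v : Matrix (Fin n) (Fin n) V), mstar v = v →
    abs n ((k : ℂ) • v) = ((|k| : ℝ) : ℂ) • abs n v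
  absorb : ∀ n, ∀ u ∈ pos n, ∀ v ∈ pos n, ∀ w ∈ pos n,
    abs n (u - v) = u + v → v - w ∈ pos n → abs n (u - w) = u + w
  ortho_pm : ∀ n, ∀ u ∈ pos n, ∀ v ∈ pos n, ∀ w ∈ pos n,
    abs n (u - v) = u + v → abs n (u - w) = u + w →
    abs n (u - abs n (v + w)) = u + abs n (v + w) ∧
      abs n (u - abs n (v - w)) = u + abs n (v - w)
  abs_smul_le : ∀ (n : ℕ) (α β : Matrix (Fin n) (Fin n) ℂ) (v : Matrix (Fin n) (Fin n) V),
    (cnorm α : ℂ) • abs n (smulB (abs n v) β) - abs n (aSmul α (smulB v β)) ∈ pos n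
  abs_dsum : ∀ (m n : ℕ) (u : Matrix (Fin m) (Fin m) V) (v : Matrix (Fin n) (Fin n) V),
    abs (m + n) (dsum u v) = dsum (abs m u) (abs n v)



namespace St5

/-! #### Partial-injection 0/1 scalar matrices -/

/-- Row-picker matrix: row `i` is `e_{f i}` (or `0`). -/
def pmat {r m : ℕ} (f : Fin r → Option (Fin m)) : Matrix (Fin r) (Fin m) ℂ :=
  Matrix.of fun i j => if f i = some j then 1 else 0

/-- Column-picker matrix: column `j` is `e_{h j}` (or `0`). -/
def qmat {n s : ℕ} (h : Fin s → Option (Fin n)) : Matrix (Fin n) (Fin s) ℂ :=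
  Matrix.of fun k j => if h j = some k then 1 else 0

lemma pmat_eq_qmat {r m : ℕ} (f : Fin r → Option (Fin m)) (g : Fin m → Option (Fin r))
    (hfg : ∀ i j, f i = some j ↔ g j = some i) : pmat f = qmat g := by
  funext i j
  simp only [pmat, qmat, Matrix.of_apply]
  by_cases h : f i = some j
  · rw [if_pos h, if_pos ((hfg i j).1 h)]
  · rw [if_neg h, if_neg (fun hg => h ((hfg i j).2 hg))]

lemma pmat_conjTranspose {r m : ℕ} (f : Fin r → Option (Fin m)) :
    (pmat f).conjTranspose = qmat f := by
  funext i j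
  simp only [Matrix.conjTranspose_apply, pmat, qmat, Matrix.of_apply]
  split <;> simp

lemma qmat_conjTranspose {n s : ℕ} (h : Fin s → Option (Fin n)) :
    (qmat h).conjTranspose = pmat h := by
  rw [← pmat_conjTranspose, Matrix.conjTranspose_conjTranspose]

lemma pmat_some (n : ℕ) : pmat (fun i : Fin n => some i) = 1 := by
  funext i j
  simp only [pmat, Matrix.of_apply, Option.some.injEq, Matrix.one_apply]

lemma qmat_some (n : ℕ) : qmat (fun i : Fin n => some i) = 1 := by
  funext i j
  simp only [qmat, Matrix.of_apply, Option.some.injEq, Matrix.one_apply]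
  exact if_congr eq_comm rfl rfl

section Actions

variable {V : Type*} [AddCommGroup V] [Module ℂ V]

lemma aSmul_pmat {r m n : ℕ} (f : Fin r → Option (Fin m)) (v : Matrix (Fin m) (Fin n) V)
    (i : Fin r) (j : Fin n) :
    aSmul (pmat f) v i j = (f i).elim 0 (fun k => v k j) := by
  unfold aSmul pmat
  cases hf : f i with
  | none => simp [hf]
  | some k =>
    simp only [Matrix.of_apply, hf, Option.some.injEq, Option.elim]
    rw [Finset.sum_eq_single k]
    · simp
    · intro b _ hb; simp [Ne.symm hb]
    · intro h; exact absurd (Finset.mem_univ k) h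

lemma smulB_qmat {m n s : ℕ} (h : Fin s → Option (Fin n)) (v : Matrix (Fin m) (Fin n) V)
    (i : Fin m) (j : Fin s) :
    smulB v (qmat h) i j = (h j).elim 0 (fun k => v i k) := by
  unfold smulB qmat
  cases hh : h j with
  | none => simp [hh]
  | some k =>
    simp only [Matrix.of_apply, hh, Option.some.injEq, Option.elim]
    rw [Finset.sum_eq_single k]
    · simp
    · intro b _ hb; simp [Ne.symm hb]
    · intro h; exact absurd (Finset.mem_univ k) h

lemma conj_apply {m n : ℕ} (f : Fin m → Option (Fin n)) (g : Fin m → Option (Fin n))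
    (v : Matrix (Fin n) (Fin n) V) (i j : Fin m) :
    aSmul (pmat f) (smulB v (qmat g)) i j
      = (f i).elim 0 (fun k => (g j).elim 0 (fun l => v k l)) := by
  rw [aSmul_pmat]
  have h : (fun k => smulB v (qmat g) k j) = (fun k => (g j).elim 0 (fun l => v k l)) := by
    funext k; exact smulB_qmat g v k j
  rw [h]

end Actions

/-! #### Norm bounds for partial-injection matrices -/

lemma pmat_mul_pmat {r m s : ℕ} (f : Fin r → Option (Fin m)) (g : Fin m → Option (Fin s)) :
    pmat f * pmat g = pmat (fun i => (f i).bind g) := by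
  funext i j
  rw [Matrix.mul_apply]
  cases hf : f i with
  | none => simp [pmat, hf]
  | some k =>
    simp only [pmat, Matrix.of_apply, hf, Option.bind_some, Option.some.injEq]
    rw [Finset.sum_eq_single k]
    · simp
    · intro b _ hb; simp [Ne.symm hb]
    · intro h; exact absurd (Finset.mem_univ k) h

/-- Partial injectivity. -/
def PInj {r m : ℕ} (f : Fin r → Option (Fin m)) : Prop :=
  ∀ i j k, f i = some k → f j = some k → i = j

lemma conjTranspose_mul_pmat {r m : ℕ} (f : Fin r → Option (Fin m)) (hf : PInj f) :
    (pmat f).conjTranspose * pmat f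
      = pmat (fun k : Fin m => if ∃ i, f i = some k then some k else none) := by
  rw [pmat_conjTranspose]
  funext k l
  rw [Matrix.mul_apply]
  simp only [qmat, pmat, Matrix.of_apply]
  by_cases hex : ∃ i, f i = some k
  · obtain ⟨i₀, hi₀⟩ := hex
    have hex' : (∃ i, f i = some k) := ⟨i₀, hi₀⟩
    rw [Finset.sum_eq_single i₀, hi₀]
    · by_cases hkl : k = l
      · subst hkl; simp [hex']
      · simp [hkl, hex']
    · intro b _ hb
      have hb' : f b ≠ some k := fun hbk => hb (hf b i₀ k hbk hi₀)
      simp [hb']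
    · intro hmem; exact absurd (Finset.mem_univ i₀) hmem
  · rw [Finset.sum_eq_zero]
    · simp [hex]
    · intro b _
      have hb' : f b ≠ some k := fun hb => hex ⟨b, hb⟩
      simp [hb']

set_option maxHeartbeats 1000000 in
lemma cnorm_pmat_le {r m : ℕ} (f : Fin r → Option (Fin m)) (hf : PInj f) :
    cnorm (pmat f) ≤ 1 := by
  set D := (pmat f).conjTranspose * pmat f with hD
  have hDp : D = pmat (fun k : Fin m => if ∃ i, f i = some k then some k else none) :=
    conjTranspose_mul_pmat f hf
  have hsym : ∀ i j : Fin m,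
      (if ∃ a, f a = some i then some i else none : Option (Fin m)) = some j
      ↔ (if ∃ a, f a = some j then some j else none : Option (Fin m)) = some i := by
    intro i j
    by_cases hi : ∃ a, f a = some i
    · by_cases hj : ∃ a, f a = some j
      · simp only [if_pos hi, if_pos hj, Option.some.injEq]
        exact eq_comm
      · simp only [if_pos hi, if_neg hj, Option.some.injEq]
        constructor
        · intro h; subst h; exact absurd hi hj
        · intro h; exact absurd h (by simp)
    · by_cases hj : ∃ a, f a = some j
      · simp only [if_neg hi, if_pos hj, Option.some.injEq]
        constructor
        · intro h; exact absurd h (by simp)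
        · intro h
          exact absurd (h ▸ hj) hi
      · simp only [if_neg hi, if_neg hj]
        simp
  have hDD : D * D = D := by
    rw [hDp, pmat_mul_pmat]
    refine congrArg pmat (funext fun a => ?_)
    by_cases h : ∃ i, f i = some a
    · rw [if_pos h, Option.bind_some, if_pos h]
    · rw [if_neg h, Option.bind_none]
  have hDH : D.conjTranspose = D := by
    rw [hDp, pmat_conjTranspose, ← pmat_eq_qmat _ _ hsym]
  have h1 : ‖D‖ * ‖D‖ = ‖D‖ :=
    calc ‖D‖ * ‖D‖ = ‖D.conjTranspose * D‖ := (Matrix.l2_opNorm_conjTranspose_mul_self D).symm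
      _ = ‖D‖ := by rw [hDH, hDD]
  have hDle : ‖D‖ ≤ 1 := by nlinarith [norm_nonneg D]
  have h2 : ‖pmat f‖ * ‖pmat f‖ = ‖D‖ := (Matrix.l2_opNorm_conjTranspose_mul_self _).symm
  have h3 := norm_nonneg (pmat f)
  unfold cnorm
  nlinarith

lemma cnorm_qmat_le {n s : ℕ} (h : Fin s → Option (Fin n)) (hh : PInj h) :
    cnorm (qmat h) ≤ 1 := by
  unfold cnorm
  rw [← pmat_conjTranspose, Matrix.l2_opNorm_conjTranspose]
  exact cnorm_pmat_le h hh

lemma cnorm_one_le (n : ℕ) : cnorm (1 : Matrix (Fin n) (Fin n) ℂ) ≤ 1 := by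
  rw [← pmat_some]
  exact cnorm_pmat_le _ (fun i j k hi hj => by
    simp only [Option.some.injEq] at hi hj; rw [hi, hj])

end St5



namespace St5

set_option linter.unusedSectionVars false

section AMOSLemmas

variable {V : Type*} [AddCommGroup V] [Module ℂ V] [StarAddMonoid V] [StarModule ℂ V]

lemma aSmul_one {m n : ℕ} (v : Matrix (Fin m) (Fin n) V) : aSmul 1 v = v := by
  funext i j
  rw [← pmat_some, aSmul_pmat]
  rfl

lemma smulB_one {m n : ℕ} (v : Matrix (Fin m) (Fin n) V) : smulB v 1 = v := by
  funext i j
  rw [← qmat_some, smulB_qmat]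
  rfl

/-- Left action of a (total) permutation-like map. -/
def LW {k m : ℕ} (σ : Fin k → Fin k) (v : Matrix (Fin k) (Fin m) V) :
    Matrix (Fin k) (Fin m) V :=
  aSmul (pmat (fun i => some (σ i))) v

/-- Right action. -/
def RW {m k : ℕ} (σ : Fin k → Fin k) (v : Matrix (Fin m) (Fin k) V) :
    Matrix (Fin m) (Fin k) V :=
  smulB v (qmat (fun i => some (σ i)))

/-- Conjugation. -/
def cj {k : ℕ} (σ : Fin k → Fin k) (v : Matrix (Fin k) (Fin k) V) :
    Matrix (Fin k) (Fin k) V :=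
  LW σ (RW σ v)

lemma LW_apply {k m : ℕ} (σ : Fin k → Fin k) (v : Matrix (Fin k) (Fin m) V) (i j) :
    LW σ v i j = v (σ i) j := by
  rw [LW, aSmul_pmat]; rfl

lemma RW_apply {m k : ℕ} (σ : Fin k → Fin k) (v : Matrix (Fin m) (Fin k) V) (i j) :
    RW σ v i j = v i (σ j) := by
  rw [RW, smulB_qmat]; rfl

lemma cj_apply {k : ℕ} (σ : Fin k → Fin k) (v : Matrix (Fin k) (Fin k) V) (i j) :
    cj σ v i j = v (σ i) (σ j) := by
  rw [cj, LW_apply, RW_apply]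

lemma cj_sub {k : ℕ} (σ : Fin k → Fin k) (u v : Matrix (Fin k) (Fin k) V) :
    cj σ (u - v) = cj σ u - cj σ v := by
  funext i j; simp [cj_apply, Matrix.sub_apply]

lemma smulB_zeroM {m n s : ℕ} (v : Matrix (Fin m) (Fin n) V) :
    smulB v (0 : Matrix (Fin n) (Fin s) ℂ) = 0 := by
  funext i j; simp [smulB]

lemma aSmul_zeroV {r m n : ℕ} (a : Matrix (Fin r) (Fin m) ℂ) :
    aSmul a (0 : Matrix (Fin m) (Fin n) V) = 0 := by
  funext i j; simp [aSmul]

variable {k : ℕ} {σ : Fin k → Fin k}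

lemma LW_LW (hσ : ∀ i, σ (σ i) = i) (v : Matrix (Fin k) (Fin k) V) :
    LW σ (LW σ v) = v := by
  funext i j; simp [LW_apply, hσ]

lemma RW_RW (hσ : ∀ i, σ (σ i) = i) (v : Matrix (Fin k) (Fin k) V) :
    RW σ (RW σ v) = v := by
  funext i j; simp [RW_apply, hσ]

lemma cj_cj (hσ : ∀ i, σ (σ i) = i) (v : Matrix (Fin k) (Fin k) V) :
    cj σ (cj σ v) = v := by
  funext i j; simp [cj_apply, hσ]

lemma cnorm_invol (hσ : ∀ i, σ (σ i) = i) : cnorm (pmat (fun i => some (σ i))) ≤ 1 := by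
  refine cnorm_pmat_le _ (fun i j l hi hj => ?_)
  simp only [Option.some.injEq] at hi hj
  have h : σ (σ i) = σ (σ j) := by rw [hi, hj]
  rwa [hσ, hσ] at h

section WithA
variable (A : AMOS V)

lemma zero_mem (n : ℕ) : (0 : Matrix (Fin n) (Fin n) V) ∈ A.pos n := by
  have h0 := A.abs_mem n n (0 : Matrix (Fin n) (Fin n) V)
  have h := A.pos_conj n n 0 _ h0
  rwa [smulB_zeroM, aSmul_zeroV] at h

lemma abs_zero (n : ℕ) : A.abs n n (0 : Matrix (Fin n) (Fin n) V) = 0 :=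
  A.abs_of_pos n 0 (zero_mem A n)

lemma smul_mem (n : ℕ) {c : ℝ} (hc : 0 ≤ c) {p : Matrix (Fin n) (Fin n) V}
    (hp : p ∈ A.pos n) : (c : ℂ) • p ∈ A.pos n := by
  have h := A.abs_real_smul n c p (A.pos_star n p hp)
  rw [A.abs_of_pos n p hp, abs_of_nonneg hc] at h
  rw [← h]
  exact A.abs_mem n n _

lemma proper (n : ℕ) {p : Matrix (Fin n) (Fin n) V} (hp : p ∈ A.pos n)
    (hnp : -p ∈ A.pos n) : p = 0 := by
  have h1 := A.abs_real_smul n (-1) p (A.pos_star n p hp)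
  have e : (((-1 : ℝ)) : ℂ) • p = -p := by push_cast; module
  rw [e] at h1
  simp only [abs_neg, abs_one, Complex.ofReal_one, one_smul] at h1
  rw [A.abs_of_pos n _ hnp, A.abs_of_pos n p hp] at h1
  have h2 : p + p = 0 := by nth_rewrite 1 [← h1]; exact neg_add_cancel p
  have h3 : (2 : ℂ) • p = 0 := by rw [two_smul]; exact h2
  have h4 : p = (2⁻¹ : ℂ) • ((2 : ℂ) • p) := by rw [smul_smul]; norm_num
  rw [h4, h3, smul_zero]

lemma eq_of_both (n : ℕ) {p q : Matrix (Fin n) (Fin n) V} (h1 : p - q ∈ A.pos n)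
    (h2 : q - p ∈ A.pos n) : p = q :=
  sub_eq_zero.mp (proper A n h1 (by rwa [neg_sub]))

lemma sub_mem_of_cle (n : ℕ) {c : ℝ} (hc : c ≤ 1) {p q : Matrix (Fin n) (Fin n) V}
    (hp : p ∈ A.pos n) (h : (c : ℂ) • p - q ∈ A.pos n) : p - q ∈ A.pos n := by
  have h2 := A.pos_add n _ (smul_mem A n (by linarith : (0:ℝ) ≤ 1 - c) hp) _ h
  have e : (((1 - c : ℝ)) : ℂ) • p + ((c : ℂ) • p - q) = p - q := by
    push_cast; module
  rwa [e] at h2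

lemma abs_abs (n : ℕ) (v : Matrix (Fin n) (Fin n) V) :
    A.abs n n (A.abs n n v) = A.abs n n v :=
  A.abs_of_pos n _ (A.abs_mem n n v)

lemma cj_pos {v : Matrix (Fin k) (Fin k) V} (hv : v ∈ A.pos k) : cj σ v ∈ A.pos k := by
  have h := A.pos_conj k k (qmat (fun i => some (σ i))) v hv
  rwa [qmat_conjTranspose] at h

lemma absLW (hσ : ∀ i, σ (σ i) = i) (v : Matrix (Fin k) (Fin k) V) :
    A.abs k k (LW σ v) = A.abs k k v := by
  have key : ∀ w : Matrix (Fin k) (Fin k) V,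
      A.abs k k w - A.abs k k (LW σ w) ∈ A.pos k := by
    intro w
    have h := A.abs_smul_le k k k k (pmat (fun i => some (σ i))) w 1
    rw [smulB_one, smulB_one, abs_abs] at h
    exact sub_mem_of_cle A k (cnorm_invol hσ) (A.abs_mem k k w) h
  refine eq_of_both A k ?_ ?_
  · have h := key (LW σ v)
    rwa [LW_LW hσ] at h
  · exact key v

lemma absRWpos (hσ : ∀ i, σ (σ i) = i) {p : Matrix (Fin k) (Fin k) V}
    (hp : p ∈ A.pos k) : A.abs k k (RW σ p) = cj σ p := by
  have h1 : A.abs k k (LW σ (RW σ p)) = A.abs k k (RW σ p) := absLW A hσ _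
  rw [← h1, show LW σ (RW σ p) = cj σ p from rfl]
  exact A.abs_of_pos k _ (cj_pos A hp)

lemma absRW (hσ : ∀ i, σ (σ i) = i) (v : Matrix (Fin k) (Fin k) V) :
    A.abs k k (RW σ v) = cj σ (A.abs k k v) := by
  have s3 : ∀ w : Matrix (Fin k) (Fin k) V,
      cj σ (A.abs k k w) - A.abs k k (RW σ w) ∈ A.pos k := by
    intro w
    have h := A.abs_smul_le k k k k 1 w (qmat (fun i => some (σ i)))
    rw [aSmul_one] at h
    rw [show smulB (A.abs k k w) (qmat (fun i => some (σ i))) = RW σ (A.abs k k w)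
      from rfl] at h
    rw [show smulB w (qmat (fun i => some (σ i))) = RW σ w from rfl] at h
    rw [absRWpos A hσ (A.abs_mem k k w)] at h
    exact sub_mem_of_cle A k (cnorm_one_le k) (cj_pos A (A.abs_mem k k w)) h
  refine eq_of_both A k ?_ (s3 v)
  have h4 := s3 (RW σ v)
  rw [RW_RW hσ] at h4
  have h5 := cj_pos A (σ := σ) h4
  rwa [cj_sub, cj_cj hσ] at h5

lemma absCJ (hσ : ∀ i, σ (σ i) = i) (v : Matrix (Fin k) (Fin k) V) :
    A.abs k k (cj σ v) = cj σ (A.abs k k v) := by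
  rw [show cj σ v = LW σ (RW σ v) from rfl, absLW A hσ, absRW A hσ]

end WithA

end AMOSLemmas

end St5



namespace St5

section DsumPad

variable {V : Type*} [AddCommGroup V] [Module ℂ V] [StarAddMonoid V] [StarModule ℂ V]

lemma dsum_add {m n r s : ℕ} (u u' : Matrix (Fin m) (Fin n) V)
    (w w' : Matrix (Fin r) (Fin s) V) :
    dsum u w + dsum u' w' = dsum (u + u') (w + w') := by
  funext i j
  simp only [Matrix.add_apply, dsum]
  by_cases hi : (i : ℕ) < m <;> by_cases hj : (j : ℕ) < n <;> simp [hi, hj]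

lemma dsum_sub {m n r s : ℕ} (u u' : Matrix (Fin m) (Fin n) V)
    (w w' : Matrix (Fin r) (Fin s) V) :
    dsum u w - dsum u' w' = dsum (u - u') (w - w') := by
  funext i j
  simp only [Matrix.sub_apply, dsum]
  by_cases hi : (i : ℕ) < m <;> by_cases hj : (j : ℕ) < n <;> simp [hi, hj]

lemma dsum_smul {m n r s : ℕ} (c : ℂ) (u : Matrix (Fin m) (Fin n) V)
    (w : Matrix (Fin r) (Fin s) V) :
    c • dsum u w = dsum (c • u) (c • w) := by
  funext i j
  simp only [Matrix.smul_apply, dsum]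
  by_cases hi : (i : ℕ) < m <;> by_cases hj : (j : ℕ) < n <;> simp [hi, hj]

lemma dsum_zero_inj {m n r s : ℕ} {u v : Matrix (Fin m) (Fin n) V}
    (h : dsum u (0 : Matrix (Fin r) (Fin s) V) = dsum v 0) : u = v := by
  funext i j
  have h2 := congrFun (congrFun h (Fin.castAdd r i)) (Fin.castAdd s j)
  simpa [dsum] using h2

lemma mstar_dsum {m n r s : ℕ} (v : Matrix (Fin m) (Fin n) V)
    (w : Matrix (Fin r) (Fin s) V) :
    mstar (dsum v w) = dsum (mstar v) (mstar w) := by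
  funext i j
  simp only [mstar, dsum]
  by_cases hi : (i : ℕ) < n <;> by_cases hj : (j : ℕ) < m <;> simp [hi, hj]

/-- The inclusion `Fin (n+m) ⇀ Fin n`. -/
def padf (n m : ℕ) : Fin (n + m) → Option (Fin n) :=
  fun i => if h : (i : ℕ) < n then some ⟨i, h⟩ else none

lemma pad_mem (A : AMOS V) {n : ℕ} (m : ℕ) {v : Matrix (Fin n) (Fin n) V}
    (hv : v ∈ A.pos n) : dsum v (0 : Matrix (Fin m) (Fin m) V) ∈ A.pos (n + m) := by
  have h := A.pos_conj (n + m) n (qmat (padf n m)) v hv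
  rw [qmat_conjTranspose] at h
  have e : aSmul (pmat (padf n m)) (smulB v (qmat (padf n m))) = dsum v 0 := by
    funext i j
    rw [conj_apply]
    unfold padf dsum
    by_cases hi : (i : ℕ) < n <;> by_cases hj : (j : ℕ) < n <;> simp [hi, hj]
  rwa [e] at h

lemma unpad_mem (A : AMOS V) {n m : ℕ} {v : Matrix (Fin n) (Fin n) V}
    (h : dsum v (0 : Matrix (Fin m) (Fin m) V) ∈ A.pos (n + m)) : v ∈ A.pos n := by
  have h2 := A.pos_conj n (n + m) (qmat (fun i : Fin n => some (Fin.castAdd m i))) _ h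
  rw [qmat_conjTranspose] at h2
  have e : aSmul (pmat (fun i : Fin n => some (Fin.castAdd m i)))
      (smulB (dsum v (0 : Matrix (Fin m) (Fin m) V))
        (qmat (fun i : Fin n => some (Fin.castAdd m i)))) = v := by
    funext i j
    rw [conj_apply]
    simp [dsum]
  rwa [e] at h2

lemma abs_dsum0 (A : AMOS V) {n : ℕ} (m : ℕ) (v : Matrix (Fin n) (Fin n) V) :
    A.abs (n + m) (n + m) (dsum v (0 : Matrix (Fin m) (Fin m) V))
      = dsum (A.abs n n v) 0 := by
  rw [A.abs_dsum n n m m v 0, abs_zero]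

end DsumPad

section FMatLemmas

/-- `a` is supported in the top-left `N × N` block. -/
def Bnd (a : FMat) (N : ℕ) : Prop := ∀ i j, (N ≤ i ∨ N ≤ j) → a i j = 0

lemma Bnd.mono {a : FMat} {n N : ℕ} (h : Bnd a n) (hnN : n ≤ N) : Bnd a N :=
  fun i j hij => h i j (by omega)

lemma Bnd.isFin {a : FMat} {n : ℕ} (h : Bnd a n) : IsFin a := ⟨n, h⟩

lemma IsFin.bnd {a : FMat} (h : IsFin a) : ∃ n, Bnd a n := h

lemma bnd_JMat (n : ℕ) : Bnd (JMat n) n := by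
  intro i j hij
  simp only [JMat]
  rw [if_neg]
  rintro ⟨rfl, h2⟩
  omega

lemma isFin_JMat (n : ℕ) : IsFin (JMat n) := (bnd_JMat n).isFin

lemma bnd_KMat (n : ℕ) : Bnd (KMat n) (n + n) := by
  intro i j hij
  simp only [KMat]
  rw [if_neg]
  rintro ⟨rfl, h2⟩
  omega

lemma isFin_KMat (n : ℕ) : IsFin (KMat n) := (bnd_KMat n).isFin

lemma bnd_embC {r m : ℕ} (α : Matrix (Fin r) (Fin m) ℂ) {N : ℕ} (hr : r ≤ N)
    (hm : m ≤ N) : Bnd (embC α) N := by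
  intro i j hij
  unfold embC
  rcases hij with h | h
  · rw [dif_neg (by omega)]
  · by_cases hi : i < r
    · rw [dif_pos hi, dif_neg (by omega)]
    · rw [dif_neg hi]

lemma isFin_embC {r m : ℕ} (α : Matrix (Fin r) (Fin m) ℂ) : IsFin (embC α) :=
  (bnd_embC α (le_max_left r m) (le_max_right r m)).isFin

lemma embC_eq_of_bnd {N : ℕ} {a : FMat} (h : Bnd a N) :
    embC (Matrix.of fun i j : Fin N => a i j) = a := by
  funext i j
  unfold embC
  by_cases hi : i < N
  · by_cases hj : j < N
    · rw [dif_pos hi, dif_pos hj]; rfl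
    · rw [dif_pos hi, dif_neg hj, h i j (Or.inr (by omega))]
  · rw [dif_neg hi, h i j (Or.inl (by omega))]

lemma embC_fstar {r m : ℕ} (α : Matrix (Fin r) (Fin m) ℂ) :
    fstar (embC α) = embC α.conjTranspose := by
  funext i j
  unfold fstar embC
  by_cases hi : i < m <;> by_cases hj : j < r <;>
    simp [hi, hj, Matrix.conjTranspose_apply]

lemma embC_one (n : ℕ) : embC (1 : Matrix (Fin n) (Fin n) ℂ) = JMat n := by
  funext i j
  unfold embC JMat
  by_cases hi : i < n
  · by_cases hj : j < n
    · rw [dif_pos hi, dif_pos hj, Matrix.one_apply]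
      by_cases hij : i = j
      · subst hij
        rw [if_pos rfl, if_pos ⟨rfl, hi⟩]
      · rw [if_neg (fun hc => hij (by simpa using congrArg Fin.val hc)),
          if_neg (fun hc => hij hc.1)]
    · rw [dif_pos hi, dif_neg hj, if_neg (fun hc => hj (by omega))]
  · rw [dif_neg hi, if_neg (fun hc => hi (by omega))]

lemma fstar_JMat (n : ℕ) : fstar (JMat n) = JMat n := by
  funext i j
  unfold fstar JMat
  by_cases hij : j = i
  · subst hij
    simp
  · rw [if_neg (fun hc => hij hc.1), if_neg (fun hc => hij (hc.1.symm)), map_zero]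

lemma fmul_JMat {N : ℕ} {a : FMat} (ha : ∀ i k, N ≤ i → a i k = 0) :
    fmul (JMat N) a = a := by
  funext i k
  unfold fmul
  by_cases hi : i < N
  · rw [tsum_eq_single i]
    · simp [JMat, hi]
    · intro j hj
      have hc : ¬(i = j ∧ i < N) := fun hc => hj (hc.1.symm)
      simp [JMat, hc]
  · rw [ha i k (le_of_not_gt hi)]
    have h0 : ∀ j, JMat N i j * a j k = 0 := by
      intro j
      have hc : ¬(i = j ∧ i < N) := fun hc => hi hc.2
      simp [JMat, hc]
    exact (tsum_congr h0).trans tsum_zero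

end FMatLemmas

end St5



namespace St5

set_option linter.unusedSectionVars false

section Fnorm

lemma mul_eq_aSmul {r m s : ℕ} (a : Matrix (Fin r) (Fin m) ℂ)
    (B : Matrix (Fin m) (Fin s) ℂ) : a * B = aSmul a B := by
  funext i j
  simp [aSmul, Matrix.mul_apply, smul_eq_mul]

lemma mul_qmat_eq_smulB {m n s : ℕ} (B : Matrix (Fin m) (Fin n) ℂ)
    (h : Fin s → Option (Fin n)) : B * qmat h = smulB B (qmat h) := by
  funext i j
  simp [smulB, Matrix.mul_apply, smul_eq_mul, mul_comm]

lemma fnorm_embC {N : ℕ} (α : Matrix (Fin N) (Fin N) ℂ) : fnorm (embC α) = cnorm α := by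
  have hle : ∀ n : ℕ,
      ‖(Matrix.of fun i j : Fin n => embC α (i : ℕ) (j : ℕ) :
        Matrix (Fin n) (Fin n) ℂ)‖ ≤ cnorm α := by
    intro n
    set fn : Fin n → Option (Fin N) :=
      fun i => if h : (i : ℕ) < N then some ⟨(i : ℕ), h⟩ else none with hfn
    have hinj : PInj fn := by
      intro i j l hi hj
      simp only [hfn] at hi hj
      by_cases h1 : (i : ℕ) < N
      · by_cases h2 : (j : ℕ) < N
        · rw [dif_pos h1] at hi
          rw [dif_pos h2] at hj
          have e1 : (i : ℕ) = (l : ℕ) := congrArg Fin.val (Option.some.inj hi)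
          have e2 : (j : ℕ) = (l : ℕ) := congrArg Fin.val (Option.some.inj hj)
          exact Fin.ext (e1.trans e2.symm)
        · rw [dif_neg h2] at hj
          exact absurd hj (by simp)
      · rw [dif_neg h1] at hi
        exact absurd hi (by simp)
    have hrepr : (Matrix.of fun i j : Fin n => embC α (i : ℕ) (j : ℕ) :
        Matrix (Fin n) (Fin n) ℂ) = pmat fn * (α * qmat fn) := by
      rw [mul_qmat_eq_smulB, mul_eq_aSmul]
      funext i j
      rw [conj_apply]
      simp only [Matrix.of_apply, hfn]
      by_cases hi : (i : ℕ) < N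
      · by_cases hj : (j : ℕ) < N
        · rw [dif_pos hi, dif_pos hj]
          simp [embC, hi, hj]
        · rw [dif_pos hi, dif_neg hj]
          simp [embC, hi, hj]
      · rw [dif_neg hi]
        simp [embC, hi]
    rw [hrepr]
    have h1 := Matrix.l2_opNorm_mul (pmat fn) (α * qmat fn)
    have h2 := Matrix.l2_opNorm_mul α (qmat fn)
    have hp := cnorm_pmat_le fn hinj
    have hq := cnorm_qmat_le fn hinj
    unfold cnorm at hp hq ⊢
    nlinarith [norm_nonneg α, norm_nonneg (qmat fn), norm_nonneg (pmat fn),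
      norm_nonneg (α * qmat fn)]
  have hNeq : (Matrix.of fun i j : Fin N => embC α (i : ℕ) (j : ℕ) :
      Matrix (Fin N) (Fin N) ℂ) = α := by
    funext i j
    simp [embC, i.isLt, j.isLt]
  unfold fnorm cnorm
  refine le_antisymm (ciSup_le hle) ?_
  have hbdd : BddAbove (Set.range fun n : ℕ =>
      ‖(Matrix.of fun i j : Fin n => embC α (i : ℕ) (j : ℕ) :
        Matrix (Fin n) (Fin n) ℂ)‖) := by
    refine ⟨cnorm α, ?_⟩
    rintro x ⟨n, rfl⟩
    exact hle n
  have h := le_ciSup hbdd N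
  rwa [hNeq] at h

end Fnorm

end St5



namespace St5

set_option linter.unusedSectionVars false

section VLemmas

variable {V 𝕍 : Type*} [AddCommGroup V] [Module ℂ V] [StarAddMonoid V] [StarModule ℂ V]
  [AddCommGroup 𝕍] [Module ℂ 𝕍]
variable {A : AMOS V} {M : FBimod 𝕍} {T : ∀ n : ℕ, Matrix (Fin n) (Fin n) V → 𝕍}

lemma fmul_JMat_JMat {n m : ℕ} (hnm : n ≤ m) : fmul (JMat n) (JMat m) = JMat n := by
  funext i k
  unfold fmul
  by_cases hi : i < n
  · rw [tsum_eq_single i]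
    · by_cases hik : i = k
      · subst hik
        simp [JMat, hi, hnm, lt_of_lt_of_le hi hnm]
      · have hc1 : ¬(i = k ∧ i < m) := fun hc => hik hc.1
        have hc2 : ¬(i = k ∧ i < n) := fun hc => hik hc.1
        simp [JMat, hi, hc1, hc2, hik]
    · intro j hj
      have hc : ¬(i = j ∧ i < n) := fun hc => hj (hc.1.symm)
      simp [JMat, hc]
  · have h0 : ∀ j, JMat n i j * JMat m j k = 0 := by
      intro j
      have hc : ¬(i = j ∧ i < n) := fun hc => hi hc.2
      simp [JMat, hc]
    rw [(tsum_congr h0).trans tsum_zero]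
    have hc : ¬(i = k ∧ i < n) := fun hc => hi hc.2
    simp [JMat, hc]

lemma T_sub (hT : IsMatLimit V M T) (n : ℕ) (u v : Matrix (Fin n) (Fin n) V) :
    T n (u - v) = T n u - T n v := by
  have e : u - v = u + (-1 : ℂ) • v := by module
  rw [e, hT.map_add, hT.map_smul]
  module

lemma cut_mono {x : 𝕍} {n m : ℕ} (h : M.cut n x = x) (hnm : n ≤ m) :
    M.cut m x = x := by
  conv_lhs => rw [← h]
  unfold FBimod.cut
  rw [M.lsmul_rsmul _ _ _ (isFin_JMat n) (isFin_JMat m),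
    ← M.rsmul_mul _ _ _ (isFin_JMat n) (isFin_JMat m),
    fmul_JMat_JMat hnm,
    ← M.mul_lsmul _ _ _ (isFin_JMat m) (isFin_JMat n),
    fmul_JMat (fun i k hi => by
      have hc : ¬(i = k ∧ i < n) := fun hc => by omega
      simp [JMat, hc])]
  exact h

lemma cut_ord (x : 𝕍) : M.cut (M.ord x) x = x :=
  Nat.sInf_mem (M.nondeg x)

lemma ord_le {x : 𝕍} {n : ℕ} (h : M.cut n x = x) : M.ord x ≤ n :=
  Nat.sInf_le h

lemma rep (hT : IsMatLimit V M T) (x : 𝕍) {N : ℕ} (h : M.ord x ≤ N) :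
    ∃ v, T N v = x :=
  hT.range N x (cut_mono (cut_ord x) h)

lemma af_T (hT : IsMatLimit V M T) (A : AMOS V) (af : 𝕍 → 𝕍)
    (haf : ∀ (n : ℕ) (v : Matrix (Fin n) (Fin n) V), M.ord (T n v) = n →
      af (T n v) = T n (A.abs n n v))
    (n : ℕ) (v : Matrix (Fin n) (Fin n) V) : af (T n v) = T n (A.abs n n v) := by
  obtain ⟨o, hle, w, hw, haf'⟩ : ∃ o, o ≤ n ∧ ∃ w, T o w = T n v ∧
      af (T n v) = T o (A.abs o o w) := by
    refine ⟨M.ord (T n v), ord_le (hT.cutT n v), ?_⟩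
    obtain ⟨w, hw⟩ := rep hT (T n v) le_rfl
    refine ⟨w, hw, ?_⟩
    have ho : M.ord (T (M.ord (T n v)) w) = M.ord (T n v) := by rw [hw]
    have h3 := haf _ w ho
    rw [hw] at h3
    exact h3
  obtain ⟨m, rfl⟩ : ∃ m, n = o + m := ⟨n - o, by omega⟩
  have hv : v = dsum w 0 := by
    apply hT.inj (o + m)
    rw [hT.embed o m w]
    exact hw.symm
  subst hv
  rw [haf', abs_dsum0 A m w, hT.embed]

/-- The positive cone of the matricial inductive limit. -/
def CS (A : AMOS V) (T : ∀ n : ℕ, Matrix (Fin n) (Fin n) V → 𝕍) : Set 𝕍 :=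
  {x : 𝕍 | ∃ n, ∃ v ∈ A.pos n, T n v = x}

lemma mem_CS_of {n : ℕ} {v : Matrix (Fin n) (Fin n) V} (h : v ∈ A.pos n) :
    T n v ∈ CS A T :=
  ⟨n, v, h, rfl⟩

lemma lift_rep (hT : IsMatLimit V M T) {n N : ℕ} {x : 𝕍} (hle : n ≤ N)
    (v : Matrix (Fin n) (Fin n) V) (hv : v ∈ A.pos n) (hx : T n v = x) :
    ∃ u ∈ A.pos N, T N u = x := by
  obtain ⟨m, rfl⟩ : ∃ m, N = n + m := ⟨N - n, by omega⟩
  exact ⟨dsum v 0, pad_mem A m hv, by rw [hT.embed]; exact hx⟩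

lemma pos_of_memCS (hT : IsMatLimit V M T) {N : ℕ} {z : Matrix (Fin N) (Fin N) V}
    (h : T N z ∈ CS A T) : z ∈ A.pos N := by
  obtain ⟨n, v, hv, hTv⟩ := h
  obtain ⟨u, hu, hTu⟩ := lift_rep hT (Nat.le_add_left n N) v hv hTv
  have he : T (N + n) (dsum z 0) = T (N + n) u := by
    rw [hT.embed N n z, ← hTu]
  have h2 : dsum z (0 : Matrix (Fin n) (Fin n) V) = u := hT.inj _ he
  rw [← h2] at hu
  exact unpad_mem A hu

lemma rsmul_T (hT : IsMatLimit V M T) (N : ℕ) (v : Matrix (Fin N) (Fin N) V)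
    (β : Matrix (Fin N) (Fin N) ℂ) :
    M.rsmul (T N v) (embC β) = T N (smulB v β) := by
  have h1 : M.rsmul (T N v) (embC β)
      = M.lsmul (JMat N) (M.rsmul (T N v) (embC β)) := by
    conv_lhs => rw [← hT.cutT N v]
    unfold FBimod.cut
    rw [M.lsmul_rsmul _ _ _ (isFin_JMat N) (isFin_embC β),
      ← M.rsmul_mul _ _ _ (isFin_JMat N) (isFin_embC β),
      fmul_JMat (fun i k hi => by unfold embC; rw [dif_neg (by omega)])]
  rw [h1, ← embC_one N, ← hT.act N 1 β v, aSmul_one]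

lemma star_cut {x : 𝕍} {n : ℕ} : M.star (M.cut n x) = M.cut n (M.star x) := by
  unfold FBimod.cut
  rw [M.star_lsmul _ _ (isFin_JMat n), M.star_rsmul _ _ (isFin_JMat n), fstar_JMat,
    M.lsmul_rsmul _ _ _ (isFin_JMat n) (isFin_JMat n)]

lemma cut_star_iff {x : 𝕍} {n : ℕ} :
    M.cut n (M.star x) = M.star x ↔ M.cut n x = x := by
  constructor
  · intro h
    have h2 := congrArg M.star h
    rwa [← star_cut, M.star_star, M.star_star] at h2
  · intro h
    have h2 := congrArg M.star h
    rwa [star_cut] at h2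

lemma ord_star {x : 𝕍} : M.ord (M.star x) = M.ord x := by
  unfold FBimod.ord
  congr 1
  ext n
  simp only [Set.mem_setOf_eq]
  exact cut_star_iff

end VLemmas

end St5



namespace St5

set_option linter.unusedSectionVars false

section PosPartMat

/-- `J`-block partial identity inside `Fin (o+o)`. -/
def fJ (o : ℕ) : Fin (o + o) → Option (Fin (o + o)) :=
  fun i => if (i : ℕ) < o then some i else none

/-- `K`-block shift `i ↦ i + o`. -/
def fK (o : ℕ) : Fin (o + o) → Option (Fin (o + o)) :=
  fun i => if h : (i : ℕ) < o then some ⟨(i : ℕ) + o, by omega⟩ else none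

/-- Partial inverse of `fK`. -/
def gK (o : ℕ) : Fin (o + o) → Option (Fin (o + o)) :=
  fun j => if h : o ≤ (j : ℕ) then some ⟨(j : ℕ) - o, by have := j.isLt; omega⟩ else none

/-- The block swap `i ↔ i + o`. -/
def σS (o : ℕ) : Fin (o + o) → Fin (o + o) :=
  fun i => if h : (i : ℕ) < o then ⟨(i : ℕ) + o, by omega⟩
    else ⟨(i : ℕ) - o, by have := i.isLt; omega⟩

lemma σS_invol (o : ℕ) : ∀ i, σS o (σS o i) = i := by
  intro i
  unfold σS
  by_cases h : (i : ℕ) < o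
  · rw [dif_pos h, dif_neg (by simp only [Fin.val_mk]; omega)]
    ext
    simp only [Fin.val_mk]
    omega
  · rw [dif_neg h, dif_pos (by simp only [Fin.val_mk]; have := i.isLt; omega)]
    ext
    simp only [Fin.val_mk]
    have := i.isLt
    omega

lemma hfgK (o : ℕ) : ∀ i j, fK o i = some j ↔ gK o j = some i := by
  intro i j
  unfold fK gK
  by_cases hi : (i : ℕ) < o
  · rw [dif_pos hi]
    by_cases hj : o ≤ (j : ℕ)
    · rw [dif_pos hj]
      simp only [Option.some.injEq, Fin.ext_iff, Fin.val_mk]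
      constructor <;> intro h <;> omega
    · rw [dif_neg hj]
      simp only [Option.some.injEq, Fin.ext_iff, Fin.val_mk]
      constructor
      · intro h; exfalso; omega
      · intro h; exact absurd h (by simp)
  · rw [dif_neg hi]
    by_cases hj : o ≤ (j : ℕ)
    · rw [dif_pos hj]
      simp only [Option.some.injEq, Fin.ext_iff, Fin.val_mk]
      constructor
      · intro h; exact absurd h (by simp)
      · intro h; exfalso; have := j.isLt; omega
    · rw [dif_neg hj]
      simp

lemma pmat_fK_eq_qmat_gK (o : ℕ) : pmat (fK o) = qmat (gK o) :=
  pmat_eq_qmat _ _ (hfgK o)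

lemma pmat_gK_eq_qmat_fK (o : ℕ) : pmat (gK o) = qmat (fK o) :=
  pmat_eq_qmat _ _ (fun i j => (hfgK o j i).symm)

lemma fJ_symm (o : ℕ) : ∀ i j, fJ o i = some j ↔ fJ o j = some i := by
  intro i j
  unfold fJ
  by_cases hi : (i : ℕ) < o <;> by_cases hj : (j : ℕ) < o <;>
    simp [hi, hj, Option.some.injEq, eq_comm]
  · intro h; subst h; exact absurd hi hj
  · intro h; subst h; exact absurd hj hi

lemma pmat_fJ_eq_qmat_fJ (o : ℕ) : pmat (fJ o) = qmat (fJ o) :=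
  pmat_eq_qmat _ _ (fJ_symm o)

lemma embC_pmat_fJ (o : ℕ) : embC (pmat (fJ o)) = JMat o := by
  funext k l
  unfold embC JMat
  by_cases hk2 : k < o + o
  · by_cases hl2 : l < o + o
    · rw [dif_pos hk2, dif_pos hl2]
      show pmat (fJ o) ⟨k, hk2⟩ ⟨l, hl2⟩ = _
      unfold pmat fJ
      simp only [Matrix.of_apply, Fin.val_mk]
      by_cases hk : k < o
      · rw [if_pos hk]
        by_cases hkl : k = l
        · subst hkl
          simp [hk]
        · rw [if_neg (by simp only [Option.some.injEq, Fin.ext_iff, Fin.val_mk]; omega),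
            if_neg (by tauto)]
      · rw [if_neg hk, if_neg (show (none : Option (Fin (o+o))) ≠ some ⟨l, hl2⟩ by simp),
          if_neg (fun hc : k = l ∧ k < o => hk hc.2)]
    · rw [dif_pos hk2, dif_neg hl2, if_neg (by omega)]
  · rw [dif_neg hk2, if_neg (by omega)]

lemma embC_pmat_fK (o : ℕ) : embC (pmat (fK o)) = KMat o := by
  funext k l
  unfold embC KMat
  by_cases hk2 : k < o + o
  · by_cases hl2 : l < o + o
    · rw [dif_pos hk2, dif_pos hl2]
      show pmat (fK o) ⟨k, hk2⟩ ⟨l, hl2⟩ = _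
      unfold pmat fK
      simp only [Matrix.of_apply, Fin.val_mk]
      by_cases hk : k < o
      · rw [dif_pos hk]
        by_cases hkl : l = k + o
        · subst hkl
          simp only [Option.some.injEq, Fin.ext_iff, Fin.val_mk]
          simp [hk]
        · rw [if_neg (by simp only [Option.some.injEq, Fin.ext_iff, Fin.val_mk]; omega),
            if_neg (by tauto)]
      · rw [dif_neg hk, if_neg (show (none : Option (Fin (o+o))) ≠ some ⟨l, hl2⟩ by simp),
          if_neg (fun hc : l = k + o ∧ k < o => hk hc.2)]
    · rw [dif_pos hk2, dif_neg hl2, if_neg (by omega)]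
  · rw [dif_neg hk2, if_neg (by omega)]

lemma KMat_eq_embC_qmat (o : ℕ) : KMat o = embC (qmat (gK o)) := by
  rw [← pmat_fK_eq_qmat_gK, embC_pmat_fK]

lemma JMat_eq_embC_pmat (o : ℕ) : JMat o = embC (pmat (fJ o)) :=
  (embC_pmat_fJ o).symm

lemma JMat_eq_embC_qmat (o : ℕ) : JMat o = embC (qmat (fJ o)) := by
  rw [← pmat_fJ_eq_qmat_fJ, embC_pmat_fJ]

lemma fstar_KMat (o : ℕ) : fstar (KMat o) = embC (pmat (gK o)) := by
  rw [← embC_pmat_fK, embC_fstar, pmat_conjTranspose, ← pmat_gK_eq_qmat_fK]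

variable {V : Type*} [AddCommGroup V] [Module ℂ V] [StarAddMonoid V] [StarModule ℂ V]

lemma mstar_zero {m n : ℕ} : mstar (0 : Matrix (Fin m) (Fin n) V) = 0 := by
  funext i j
  simp [mstar]

/-- The off-diagonal `2×2` block `[[0, w],[w*, 0]]`. -/
def Ymat (o : ℕ) (w : Matrix (Fin o) (Fin o) V) :
    Matrix (Fin (o + o)) (Fin (o + o)) V :=
  fun i j =>
    if hi : (i : ℕ) < o then
      (if hj : (j : ℕ) < o then 0
        else w ⟨i, hi⟩ ⟨(j : ℕ) - o, by have := j.isLt; omega⟩)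
    else
      (if hj : (j : ℕ) < o then star (w ⟨j, hj⟩ ⟨(i : ℕ) - o, by have := i.isLt; omega⟩)
        else 0)

lemma Ymat_star (o : ℕ) (w : Matrix (Fin o) (Fin o) V) : mstar (Ymat o w) = Ymat o w := by
  funext i j
  unfold mstar Ymat
  by_cases hi : (i : ℕ) < o <;> by_cases hj : (j : ℕ) < o <;>
    simp [hi, hj, star_star]

lemma Ymat_SY (o : ℕ) (w : Matrix (Fin o) (Fin o) V) :
    LW (σS o) (Ymat o w) = dsum (mstar w) w := by
  funext i j
  rw [LW_apply]
  unfold σS Ymat dsum mstar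
  by_cases hi : (i : ℕ) < o
  · have h1 : ¬ ((i : ℕ) + o < o) := by omega
    by_cases hj : (j : ℕ) < o
    · simp [hi, hj, h1]
    · simp [hi, hj, h1]
  · have h1 : (i : ℕ) - o < o := by have := i.isLt; omega
    by_cases hj : (j : ℕ) < o
    · simp [hi, hj, h1]
    · simp [hi, hj, h1]

lemma posPart_pos (A : AMOS V) (o : ℕ) (w : Matrix (Fin o) (Fin o) V) :
    dsum (A.abs o o (mstar w)) (A.abs o o w) + Ymat o w ∈ A.pos (o + o) := by
  have habs : A.abs (o + o) (o + o) (Ymat o w)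
      = dsum (A.abs o o (mstar w)) (A.abs o o w) := by
    rw [← absLW A (σS_invol o) (Ymat o w), Ymat_SY, A.abs_dsum]
  have h := (A.abs_add_self (o + o) (Ymat o w) (Ymat_star o w)).1
  rwa [habs] at h

lemma posPart_decomp (A : AMOS V) (o : ℕ) (w : Matrix (Fin o) (Fin o) V) :
    dsum (A.abs o o (mstar w)) (0 : Matrix (Fin o) (Fin o) V)
      + aSmul (pmat (gK o)) (smulB (dsum (A.abs o o w) (0 : Matrix (Fin o) (Fin o) V))
          (qmat (gK o)))
      + aSmul (pmat (fJ o)) (smulB (dsum w (0 : Matrix (Fin o) (Fin o) V)) (qmat (gK o)))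
      + aSmul (pmat (gK o)) (smulB (dsum (mstar w) (0 : Matrix (Fin o) (Fin o) V))
          (pmat (fJ o)))
    = dsum (A.abs o o (mstar w)) (A.abs o o w) + Ymat o w := by
  rw [show smulB (dsum (mstar w) (0 : Matrix (Fin o) (Fin o) V)) (pmat (fJ o))
    = smulB (dsum (mstar w) (0 : Matrix (Fin o) (Fin o) V)) (qmat (fJ o)) from by
      rw [pmat_fJ_eq_qmat_fJ]]
  funext i j
  simp only [Matrix.add_apply]
  rw [conj_apply, conj_apply, conj_apply]
  unfold fJ gK Ymat dsum mstar
  by_cases hi : (i : ℕ) < o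
  · have hi' : ¬ o ≤ (i : ℕ) := not_le.mpr hi
    by_cases hj : (j : ℕ) < o
    · have hj' : ¬ o ≤ (j : ℕ) := not_le.mpr hj
      simp [hi, hj, hi', hj']
    · have hj' : o ≤ (j : ℕ) := le_of_not_gt hj
      have hj2 : (j : ℕ) - o < o := by have := j.isLt; omega
      simp [hi, hj, hi', hj', hj2]
  · have hi' : o ≤ (i : ℕ) := le_of_not_gt hi
    have hi2 : (i : ℕ) - o < o := by have := i.isLt; omega
    by_cases hj : (j : ℕ) < o
    · simp [hi, hj, hi', hi2, not_le.mpr hj]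
    · have hj' : o ≤ (j : ℕ) := le_of_not_gt hj
      have hj2 : (j : ℕ) - o < o := by have := j.isLt; omega
      simp [hi, hj, hi', hj', hi2, hj2]

end PosPartMat

end St5



namespace St5

set_option linter.unusedSectionVars false

section IndepMat

/-- Lower-block inclusion. -/
def lo {N : ℕ} (i : Fin N) : Fin (N + N) := Fin.castAdd N i

/-- Upper-block inclusion. -/
def hi2 {N : ℕ} (i : Fin N) : Fin (N + N) := ⟨(i : ℕ) + N, by omega⟩

lemma lo_or_hi {N : ℕ} (p : Fin (N + N)) : (∃ i, p = lo i) ∨ (∃ i, p = hi2 i) := by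
  by_cases h : (p : ℕ) < N
  · exact Or.inl ⟨⟨(p : ℕ), h⟩, by ext; simp [lo]⟩
  · refine Or.inr ⟨⟨(p : ℕ) - N, by have := p.isLt; omega⟩, ?_⟩
    ext
    simp only [hi2, Fin.val_mk]
    omega

variable {V : Type*} [AddCommGroup V] [Module ℂ V] [StarAddMonoid V] [StarModule ℂ V]

lemma dsum_lo_lo {N : ℕ} (a b : Matrix (Fin N) (Fin N) V) (i j : Fin N) :
    dsum a b (lo i) (lo j) = a i j := by
  unfold dsum lo
  rw [dif_pos (by simp), dif_pos (by simp)]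
  congr 1 <;> ext <;> simp

lemma dsum_lo_hi {N : ℕ} (a b : Matrix (Fin N) (Fin N) V) (i j : Fin N) :
    dsum a b (lo i) (hi2 j) = 0 := by
  unfold dsum lo hi2
  rw [dif_pos (by simp), dif_neg (by simp)]

lemma dsum_hi_lo {N : ℕ} (a b : Matrix (Fin N) (Fin N) V) (i j : Fin N) :
    dsum a b (hi2 i) (lo j) = 0 := by
  unfold dsum lo hi2
  rw [dif_neg (by simp), dif_pos (by simp)]

lemma dsum_hi_hi {N : ℕ} (a b : Matrix (Fin N) (Fin N) V) (i j : Fin N) :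
    dsum a b (hi2 i) (hi2 j) = b i j := by
  unfold dsum hi2
  rw [dif_neg (by simp), dif_neg (by simp)]
  congr 1 <;> ext <;> simp

lemma dsum_hi_zero {N : ℕ} (a : Matrix (Fin N) (Fin N) V) (i : Fin N)
    (q : Fin (N + N)) : dsum a (0 : Matrix (Fin N) (Fin N) V) (hi2 i) q = 0 := by
  unfold dsum hi2
  rw [dif_neg (by simp)]
  split <;> simp

lemma dsum_zero_hi {N : ℕ} (a : Matrix (Fin N) (Fin N) V) (p : Fin (N + N))
    (j : Fin N) : dsum a (0 : Matrix (Fin N) (Fin N) V) p (hi2 j) = 0 := by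
  unfold dsum hi2
  split
  · rw [dif_neg (by simp)]
  · rw [dif_neg (by simp)]
    simp

/-- The block-swap permutation exchanging `i ↔ i + N` exactly for `i ∈ J`. -/
def σW (J : Finset ℕ) (N : ℕ) : Fin (N + N) → Fin (N + N) :=
  fun i => if h : (i : ℕ) < N then
      (if (i : ℕ) ∈ J then ⟨(i : ℕ) + N, by omega⟩ else i)
    else (if (i : ℕ) - N ∈ J then ⟨(i : ℕ) - N, by have := i.isLt; omega⟩ else i)

lemma σW_lo_mem {J : Finset ℕ} {N : ℕ} {i : Fin N} (h : (i : ℕ) ∈ J) :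
    σW J N (lo i) = hi2 i := by
  unfold σW lo hi2
  rw [dif_pos (by simp), if_pos (by simpa using h)]
  ext
  simp

lemma σW_lo_not {J : Finset ℕ} {N : ℕ} {i : Fin N} (h : (i : ℕ) ∉ J) :
    σW J N (lo i) = lo i := by
  unfold σW lo
  rw [dif_pos (by simp), if_neg (by simpa using h)]

lemma σW_hi_mem {J : Finset ℕ} {N : ℕ} {i : Fin N} (h : (i : ℕ) ∈ J) :
    σW J N (hi2 i) = lo i := by
  unfold σW lo hi2
  rw [dif_neg (by simp), if_pos (by simpa using h)]
  ext
  simp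

lemma σW_hi_not {J : Finset ℕ} {N : ℕ} {i : Fin N} (h : (i : ℕ) ∉ J) :
    σW J N (hi2 i) = hi2 i := by
  unfold σW hi2
  rw [dif_neg (by simp), if_neg (by simpa using h)]

lemma σW_invol (J : Finset ℕ) (N : ℕ) : ∀ p, σW J N (σW J N p) = p := by
  intro p
  rcases lo_or_hi p with ⟨i, rfl⟩ | ⟨i, rfl⟩ <;> by_cases h : (i : ℕ) ∈ J
  · rw [σW_lo_mem h, σW_hi_mem h]
  · rw [σW_lo_not h, σW_lo_not h]
  · rw [σW_hi_mem h, σW_lo_mem h]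
  · rw [σW_hi_not h, σW_hi_not h]

/-- The diagonal indicator of a finite set, as a partial map. -/
def dI (I : Finset ℕ) (N : ℕ) : Fin N → Option (Fin N) :=
  fun i => if (i : ℕ) ∈ I then some i else none

lemma dI_symm (I : Finset ℕ) (N : ℕ) :
    ∀ i j, dI I N i = some j ↔ dI I N j = some i := by
  intro i j
  unfold dI
  by_cases hi : (i : ℕ) ∈ I <;> by_cases hj : (j : ℕ) ∈ I <;>
    simp [hi, hj, Option.some.injEq, eq_comm]
  · intro h; subst h; exact absurd hi hj
  · intro h; subst h; exact absurd hj hi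

lemma pmat_dI_eq_qmat_dI (I : Finset ℕ) (N : ℕ) : pmat (dI I N) = qmat (dI I N) :=
  pmat_eq_qmat _ _ (dI_symm I N)

lemma embC_pmat_dI (I : Finset ℕ) (N : ℕ) (hIN : ∀ a ∈ I, a < N) :
    embC (pmat (dI I N)) = finsetDiag I := by
  funext k l
  unfold embC finsetDiag
  by_cases hk2 : k < N
  · by_cases hl2 : l < N
    · rw [dif_pos hk2, dif_pos hl2]
      show pmat (dI I N) ⟨k, hk2⟩ ⟨l, hl2⟩ = _
      unfold pmat dI
      simp only [Matrix.of_apply, Fin.val_mk]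
      by_cases hk : k ∈ I
      · rw [if_pos hk]
        by_cases hkl : k = l
        · subst hkl
          simp [hk]
        · rw [if_neg (by simp only [Option.some.injEq, Fin.ext_iff, Fin.val_mk]; omega),
            if_neg (fun hc : k = l ∧ k ∈ I => hkl hc.1)]
      · rw [if_neg hk, if_neg (show (none : Option (Fin N)) ≠ some ⟨l, hl2⟩ by simp),
          if_neg (fun hc : k = l ∧ k ∈ I => hk hc.2)]
    · rw [dif_pos hk2, dif_neg hl2,
        if_neg (fun hc : k = l ∧ k ∈ I => hl2 (hc.1 ▸ hIN k hc.2))]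
  · rw [dif_neg hk2, if_neg (fun hc : k = l ∧ k ∈ I => hk2 (hIN k hc.2))]

lemma embC_qmat_dI (I : Finset ℕ) (N : ℕ) (hIN : ∀ a ∈ I, a < N) :
    embC (qmat (dI I N)) = finsetDiag I := by
  rw [← pmat_dI_eq_qmat_dI, embC_pmat_dI I N hIN]

lemma indep_mat (A : AMOS V) {N : ℕ} {I J : Finset ℕ} (hIJ : ∀ a, a ∈ I → a ∉ J)
    {u v : Matrix (Fin N) (Fin N) V}
    (hu : ∀ i j : Fin N, ((i : ℕ) ∉ I ∨ (j : ℕ) ∉ I) → u i j = 0)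
    (hv : ∀ i j : Fin N, ((i : ℕ) ∉ J ∨ (j : ℕ) ∉ J) → v i j = 0) :
    A.abs N N (u + v) = A.abs N N u + A.abs N N v := by
  have hσ := σW_invol J N
  have hJI : ∀ a : ℕ, a ∈ J → a ∉ I := fun a ha hb => hIJ a hb ha
  have hconj : cj (σW J N) (dsum u v) = dsum (u + v) (0 : Matrix (Fin N) (Fin N) V) := by
    funext p q
    rw [cj_apply]
    rcases lo_or_hi p with ⟨i, rfl⟩ | ⟨i, rfl⟩ <;>
      rcases lo_or_hi q with ⟨j, rfl⟩ | ⟨j, rfl⟩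
    · by_cases hi : (i : ℕ) ∈ J <;> by_cases hj : (j : ℕ) ∈ J
      · rw [σW_lo_mem hi, σW_lo_mem hj, dsum_hi_hi, dsum_lo_lo, Matrix.add_apply,
          hu i j (Or.inl (hJI _ hi)), zero_add]
      · rw [σW_lo_mem hi, σW_lo_not hj, dsum_hi_lo, dsum_lo_lo, Matrix.add_apply,
          hu i j (Or.inl (hJI _ hi)), hv i j (Or.inr hj), add_zero]
      · rw [σW_lo_not hi, σW_lo_mem hj, dsum_lo_hi, dsum_lo_lo, Matrix.add_apply,
          hu i j (Or.inr (hJI _ hj)), hv i j (Or.inl hi), add_zero]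
      · rw [σW_lo_not hi, σW_lo_not hj, dsum_lo_lo, dsum_lo_lo, Matrix.add_apply,
          hv i j (Or.inl hi), add_zero]
    · rw [dsum_zero_hi]
      by_cases hi : (i : ℕ) ∈ J <;> by_cases hj : (j : ℕ) ∈ J
      · rw [σW_lo_mem hi, σW_hi_mem hj, dsum_hi_lo]
      · rw [σW_lo_mem hi, σW_hi_not hj, dsum_hi_hi, hv i j (Or.inr hj)]
      · rw [σW_lo_not hi, σW_hi_mem hj, dsum_lo_lo, hu i j (Or.inr (hJI _ hj))]
      · rw [σW_lo_not hi, σW_hi_not hj, dsum_lo_hi]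
    · rw [dsum_hi_zero]
      by_cases hi : (i : ℕ) ∈ J <;> by_cases hj : (j : ℕ) ∈ J
      · rw [σW_hi_mem hi, σW_lo_mem hj, dsum_lo_hi]
      · rw [σW_hi_mem hi, σW_lo_not hj, dsum_lo_lo, hu i j (Or.inl (hJI _ hi))]
      · rw [σW_hi_not hi, σW_lo_mem hj, dsum_hi_hi, hv i j (Or.inl hi)]
      · rw [σW_hi_not hi, σW_lo_not hj, dsum_hi_lo]
    · rw [dsum_hi_zero]
      by_cases hi : (i : ℕ) ∈ J <;> by_cases hj : (j : ℕ) ∈ J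
      · rw [σW_hi_mem hi, σW_hi_mem hj, dsum_lo_lo, hu i j (Or.inl (hJI _ hi))]
      · rw [σW_hi_mem hi, σW_hi_not hj, dsum_lo_hi]
      · rw [σW_hi_not hi, σW_hi_mem hj, dsum_hi_lo]
      · rw [σW_hi_not hi, σW_hi_not hj, dsum_hi_hi, hv i j (Or.inl hi)]
  have EQ : dsum (A.abs N N (u + v)) (0 : Matrix (Fin N) (Fin N) V)
      = cj (σW J N) (dsum (A.abs N N u) (A.abs N N v)) := by
    have h1 := absCJ A hσ (dsum u v)
    rw [hconj, abs_dsum0 A N (u + v), A.abs_dsum N N N N u v] at h1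
    exact h1
  have EQe : ∀ p q : Fin (N + N),
      dsum (A.abs N N (u + v)) (0 : Matrix (Fin N) (Fin N) V) p q
        = dsum (A.abs N N u) (A.abs N N v) (σW J N p) (σW J N q) := by
    intro p q
    have h2 := congrFun (congrFun EQ p) q
    rwa [cj_apply] at h2
  have hau : ∀ (i j : Fin N), ((i : ℕ) ∈ J ∨ (j : ℕ) ∈ J) → A.abs N N u i j = 0 := by
    intro i j h
    rcases h with h | h
    · have h3 := EQe (hi2 i) (σW J N (lo j))
      rw [dsum_hi_zero, hσ (lo j), σW_hi_mem h, dsum_lo_lo] at h3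
      exact h3.symm
    · have h3 := EQe (σW J N (lo i)) (hi2 j)
      rw [dsum_zero_hi, hσ (lo i), σW_hi_mem h, dsum_lo_lo] at h3
      exact h3.symm
  have hav : ∀ (i j : Fin N), ((i : ℕ) ∉ J ∨ (j : ℕ) ∉ J) → A.abs N N v i j = 0 := by
    intro i j h
    rcases h with h | h
    · have h3 := EQe (hi2 i) (σW J N (hi2 j))
      rw [dsum_hi_zero, hσ (hi2 j), σW_hi_not h, dsum_hi_hi] at h3
      exact h3.symm
    · have h3 := EQe (σW J N (hi2 i)) (hi2 j)
      rw [dsum_zero_hi, hσ (hi2 i), σW_hi_not h, dsum_hi_hi] at h3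
      exact h3.symm
  funext i j
  have h3 := EQe (lo i) (lo j)
  rw [dsum_lo_lo] at h3
  rw [Matrix.add_apply]
  by_cases hi : (i : ℕ) ∈ J <;> by_cases hj : (j : ℕ) ∈ J
  · rw [σW_lo_mem hi, σW_lo_mem hj, dsum_hi_hi] at h3
    rw [h3, hau i j (Or.inl hi), zero_add]
  · rw [σW_lo_mem hi, σW_lo_not hj, dsum_hi_lo] at h3
    rw [h3, hau i j (Or.inl hi), hav i j (Or.inr hj), add_zero]
  · rw [σW_lo_not hi, σW_lo_mem hj, dsum_lo_hi] at h3
    rw [h3, hau i j (Or.inr hj), hav i j (Or.inl hi), add_zero]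
  · rw [σW_lo_not hi, σW_lo_not hj, dsum_lo_lo] at h3
    rw [h3, hav i j (Or.inl hi), add_zero]

end IndepMat

end St5


/-- The matricial inductive limit `(𝔙, 𝔙⁺)` of an absolutely matrix
ordered space `V`, equipped with `|𝔳| := T_{o(𝔳)}(|T_{o(𝔳)}⁻¹(𝔳)|)`, is a
non-degenerate absolutely ordered `𝔉`-bimodule; in particular `|·|` is additive on
`𝔉`-independent elements. -/
theorem statement5 {V 𝕍 : Type*} [AddCommGroup V] [Module ℂ V] [StarAddMonoid V]
    [StarModule ℂ V] [AddCommGroup 𝕍] [Module ℂ 𝕍] (A : AMOS V) (M : FBimod 𝕍)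
    (T : ∀ n : ℕ, Matrix (Fin n) (Fin n) V → 𝕍) (hT : IsMatLimit V M T)
    (af : 𝕍 → 𝕍)
    (haf : ∀ (n : ℕ) (v : Matrix (Fin n) (Fin n) V), M.ord (T n v) = n →
      af (T n v) = T n (A.abs n n v)) :
    M.IsAbsOrd {x : 𝕍 | ∃ n, ∃ v ∈ A.pos n, T n v = x} af ∧
      (∀ u v : 𝕍, M.FIndep u v → af (u + v) = af u + af v) := by
  have hafT : ∀ (n : ℕ) (v : Matrix (Fin n) (Fin n) V),
      af (T n v) = T n (A.abs n n v) := St5.af_T hT A af haf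
  have hmem : ∀ (N : ℕ) (z : Matrix (Fin N) (Fin N) V), z ∈ A.pos N →
      T N z ∈ {x : 𝕍 | ∃ n, ∃ v ∈ A.pos n, T n v = x} :=
    fun N z h => ⟨N, z, h, rfl⟩
  have hmem' : ∀ (N : ℕ) (z : Matrix (Fin N) (Fin N) V),
      T N z ∈ {x : 𝕍 | ∃ n, ∃ v ∈ A.pos n, T n v = x} → z ∈ A.pos N :=
    fun N z h => St5.pos_of_memCS hT h
  have hafx : ∀ (x : 𝕍) (N : ℕ) (w : Matrix (Fin N) (Fin N) V), T N w = x →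
      af x = T N (A.abs N N w) := by
    intro x N w hw
    conv_lhs => rw [← hw]
    exact hafT N w
  -- additivity on 𝔉-independent elements
  have hind : ∀ u v : 𝕍, M.FIndep u v → af (u + v) = af u + af v := by
    rintro u v ⟨I, J, hdisj, hIu, hJv⟩
    have hIJ : ∀ a, a ∈ I → a ∉ J := fun a ha hb => Finset.disjoint_left.mp hdisj ha hb
    set N := max (max (M.ord u) (M.ord v)) ((I ∪ J).sup id + 1) with hN
    have hIN : ∀ a ∈ I, a < N := by
      intro a ha
      have h1 : a ≤ (I ∪ J).sup id := Finset.le_sup (f := id) (Finset.mem_union_left J ha)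
      omega
    have hJN : ∀ a ∈ J, a < N := by
      intro a ha
      have h1 : a ≤ (I ∪ J).sup id := Finset.le_sup (f := id) (Finset.mem_union_right I ha)
      omega
    obtain ⟨u', hu'⟩ := St5.rep hT u (by omega : M.ord u ≤ N)
    obtain ⟨v', hv'⟩ := St5.rep hT v (by omega : M.ord v ≤ N)
    have hembp : embC (St5.pmat (St5.dI I N)) = finsetDiag I := St5.embC_pmat_dI I N hIN
    have hembq : embC (St5.qmat (St5.dI I N)) = finsetDiag I := St5.embC_qmat_dI I N hIN
    have hembp' : embC (St5.pmat (St5.dI J N)) = finsetDiag J := St5.embC_pmat_dI J N hJN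
    have hembq' : embC (St5.qmat (St5.dI J N)) = finsetDiag J := St5.embC_qmat_dI J N hJN
    have hdIu : aSmul (St5.pmat (St5.dI I N)) (smulB u' (St5.qmat (St5.dI I N))) = u' := by
      apply hT.inj N
      rw [hT.act N _ _ u', hembp, hembq, hu', hIu]
    have hdJv : aSmul (St5.pmat (St5.dI J N)) (smulB v' (St5.qmat (St5.dI J N))) = v' := by
      apply hT.inj N
      rw [hT.act N _ _ v', hembp', hembq', hv', hJv]
    have hu0 : ∀ i j : Fin N, ((i : ℕ) ∉ I ∨ (j : ℕ) ∉ I) → u' i j = 0 := by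
      intro i j h
      conv_lhs => rw [← hdIu]
      rw [St5.conj_apply]
      rcases h with h | h
      · simp [St5.dI, h]
      · by_cases h2 : (i : ℕ) ∈ I <;> simp [St5.dI, h, h2]
    have hv0 : ∀ i j : Fin N, ((i : ℕ) ∉ J ∨ (j : ℕ) ∉ J) → v' i j = 0 := by
      intro i j h
      conv_lhs => rw [← hdJv]
      rw [St5.conj_apply]
      rcases h with h | h
      · simp [St5.dI, h]
      · by_cases h2 : (i : ℕ) ∈ J <;> simp [St5.dI, h, h2]
    have key := St5.indep_mat A hIJ hu0 hv0
    have h1 : u + v = T N (u' + v') := by rw [hT.map_add, hu', hv']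
    have hu2 : af u = T N (A.abs N N u') := hafx u N u' hu'
    have hv2 : af v = T N (A.abs N N v') := hafx v N v' hv'
    rw [h1, hafT, key, hT.map_add, hu2, hv2]
  refine ⟨⟨⟨?_, ?_, ?_⟩, ?_, ?_, ?_, ?_, ?_, hind, ?_, ?_⟩, hind⟩
  · -- star
    rintro x ⟨n, v, hv, rfl⟩
    rw [hT.map_star, A.pos_star n v hv]
  · -- add
    rintro x ⟨n, a, ha, rfl⟩ y ⟨m, b, hb, rfl⟩
    obtain ⟨a', ha', hTa⟩ := St5.lift_rep hT (le_max_left n m) a ha rfl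
    obtain ⟨b', hb', hTb⟩ := St5.lift_rep hT (le_max_right n m) b hb rfl
    rw [← hTa, ← hTb, ← hT.map_add]
    exact hmem _ _ (A.pos_add _ _ ha' _ hb')
  · -- conj
    rintro x ⟨n, v, hv, rfl⟩ a ⟨na, hba⟩
    obtain ⟨v', hv', hTv⟩ := St5.lift_rep hT (le_max_left n na) v hv rfl
    have hα : embC (Matrix.of fun i j : Fin (max n na) => a (i : ℕ) (j : ℕ)) = a :=
      St5.embC_eq_of_bnd (St5.Bnd.mono hba (le_max_right n na))
    unfold FBimod.conj
    rw [← hTv, ← hα, St5.embC_fstar, ← hT.act]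
    exact hmem _ _ (A.pos_conj _ _ _ v' hv')
  · -- abs_mem
    intro x
    obtain ⟨w, hw⟩ := St5.rep hT x le_rfl
    rw [hafx x (M.ord x) w hw]
    exact hmem _ _ (A.abs_mem _ _ w)
  · -- ord_abs_le
    intro x
    obtain ⟨w, hw⟩ := St5.rep hT x le_rfl
    calc M.ord (af x) = M.ord (T (M.ord x) (A.abs (M.ord x) (M.ord x) w)) := by
          rw [hafx x (M.ord x) w hw]
      _ ≤ M.ord x := St5.ord_le (hT.cutT _ _)
  · -- abs_of_mem
    rintro x ⟨n, v, hv, rfl⟩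
    rw [hafT n v, A.abs_of_pos n v hv]
  · -- pos_part
    intro x
    obtain ⟨w, hw⟩ := St5.rep hT x le_rfl
    rw [← hw]
    have hordT : M.ord (T (M.ord x) w) = M.ord x := by rw [hw]
    rw [hordT]
    clear hordT hw
    revert w
    generalize M.ord x = o
    intro w
    have hx2 : T o w = T (o + o) (dsum w (0 : Matrix (Fin o) (Fin o) V)) :=
      (hT.embed o o w).symm
    have hsx : M.star (T o w)
        = T (o + o) (dsum (mstar w) (0 : Matrix (Fin o) (Fin o) V)) := by
      rw [hT.map_star o w]
      exact (hT.embed o o _).symm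
    have hafx2 : af (T o w)
        = T (o + o) (dsum (A.abs o o w) (0 : Matrix (Fin o) (Fin o) V)) := by
      rw [hafT o w]
      exact (hT.embed o o _).symm
    have hafsx : af (M.star (T o w))
        = T (o + o) (dsum (A.abs o o (mstar w)) (0 : Matrix (Fin o) (Fin o) V)) := by
      rw [hT.map_star o w, hafT]
      exact (hT.embed o o _).symm
    unfold FBimod.pairPlus FBimod.san
    rw [hafsx, hafx2, hsx, hx2]
    rw [St5.fstar_KMat o, St5.KMat_eq_embC_qmat o, St5.JMat_eq_embC_pmat o]
    rw [← hT.act, ← hT.act, ← hT.act, ← hT.map_add, ← hT.map_add, ← hT.map_add]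
    refine hmem _ _ ?_
    have hd : dsum (A.abs o o (mstar w)) (0 : Matrix (Fin o) (Fin o) V)
        + aSmul (St5.pmat (St5.gK o)) (smulB (dsum (A.abs o o w) 0) (St5.qmat (St5.gK o)))
        + (aSmul (St5.pmat (St5.fJ o)) (smulB (dsum w 0) (St5.qmat (St5.gK o)))
          + aSmul (St5.pmat (St5.gK o)) (smulB (dsum (mstar w) 0) (St5.pmat (St5.fJ o))))
        = dsum (A.abs o o (mstar w)) (A.abs o o w) + St5.Ymat o w := by
      rw [← add_assoc]
      exact St5.posPart_decomp A o w
    rw [hd]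
    exact St5.posPart_pos A o w
  · -- abs_smul_le
    intro a b ha hb x
    obtain ⟨na, hba⟩ := ha
    obtain ⟨nb, hbb⟩ := hb
    set N := max (max na nb) (M.ord x) with hN
    obtain ⟨v, hv⟩ := St5.rep hT x (by omega : M.ord x ≤ N)
    have hα : embC (Matrix.of fun i j : Fin N => a (i : ℕ) (j : ℕ)) = a :=
      St5.embC_eq_of_bnd (St5.Bnd.mono hba (by omega))
    have hβ : embC (Matrix.of fun i j : Fin N => b (i : ℕ) (j : ℕ)) = b :=
      St5.embC_eq_of_bnd (St5.Bnd.mono hbb (by omega))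
    set α := (Matrix.of fun i j : Fin N => a (i : ℕ) (j : ℕ)) with hα0
    set β := (Matrix.of fun i j : Fin N => b (i : ℕ) (j : ℕ)) with hβ0
    have h1 : M.lsmul a (M.rsmul x b) = T N (aSmul α (smulB v β)) := by
      conv_lhs => rw [← hv, ← hα, ← hβ]
      exact (hT.act N α β v).symm
    have h2 : af (M.lsmul a (M.rsmul x b)) = T N (A.abs N N (aSmul α (smulB v β))) := by
      rw [h1, hafT]
    have hax : af x = T N (A.abs N N v) := hafx x N v hv
    have h3 : M.rsmul (af x) b = T N (smulB (A.abs N N v) β) := by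
      rw [hax, ← hβ, St5.rsmul_T hT]
    have h4 : af (M.rsmul (af x) b) = T N (A.abs N N (smulB (A.abs N N v) β)) := by
      rw [h3, hafT]
    have h5 : fnorm a = cnorm α := by rw [← hα, St5.fnorm_embC]
    rw [h2, h4, h5, ← hT.map_smul, ← St5.T_sub hT]
    exact hmem _ _ (A.abs_smul_le N N N N α v β)
  · -- absorb
    rintro u₀ ⟨nu, pu, hpu, hTu⟩ v₀ ⟨nv, pv, hpv, hTv⟩ w₀ ⟨nw, pw, hpw, hTw⟩ h1 h2
    set N := max (max nu nv) nw with hN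
    obtain ⟨u', hu', hTu'⟩ := St5.lift_rep hT (by omega : nu ≤ N) pu hpu hTu
    obtain ⟨v', hv', hTv'⟩ := St5.lift_rep hT (by omega : nv ≤ N) pv hpv hTv
    obtain ⟨w', hw', hTw'⟩ := St5.lift_rep hT (by omega : nw ≤ N) pw hpw hTw
    have e1 : u₀ - v₀ = T N (u' - v') := by rw [St5.T_sub hT, hTu', hTv']
    have hA1 : A.abs N N (u' - v') = u' + v' := by
      apply hT.inj N
      rw [← hafT, ← e1, h1, hT.map_add, hTu', hTv']
    have e2 : v₀ - w₀ = T N (v' - w') := by rw [St5.T_sub hT, hTv', hTw']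
    have hA2 : v' - w' ∈ A.pos N := hmem' N _ (by rw [← e2]; exact h2)
    have key := A.absorb N u' hu' v' hv' w' hw' hA1 hA2
    have e3 : u₀ - w₀ = T N (u' - w') := by rw [St5.T_sub hT, hTu', hTw']
    rw [e3, hafT, key, hT.map_add, hTu', hTw']
  · -- ortho_pm
    rintro u₀ ⟨nu, pu, hpu, hTu⟩ v₀ ⟨nv, pv, hpv, hTv⟩ w₀ ⟨nw, pw, hpw, hTw⟩ h1 h2
    set N := max (max nu nv) nw with hN
    obtain ⟨u', hu', hTu'⟩ := St5.lift_rep hT (by omega : nu ≤ N) pu hpu hTu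
    obtain ⟨v', hv', hTv'⟩ := St5.lift_rep hT (by omega : nv ≤ N) pv hpv hTv
    obtain ⟨w', hw', hTw'⟩ := St5.lift_rep hT (by omega : nw ≤ N) pw hpw hTw
    have e1 : u₀ - v₀ = T N (u' - v') := by rw [St5.T_sub hT, hTu', hTv']
    have hA1 : A.abs N N (u' - v') = u' + v' := by
      apply hT.inj N
      rw [← hafT, ← e1, h1, hT.map_add, hTu', hTv']
    have e2 : u₀ - w₀ = T N (u' - w') := by rw [St5.T_sub hT, hTu', hTw']
    have hA2 : A.abs N N (u' - w') = u' + w' := by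
      apply hT.inj N
      rw [← hafT, ← e2, h2, hT.map_add, hTu', hTw']
    obtain ⟨k1, k2⟩ := A.ortho_pm N u' hu' v' hv' w' hw' hA1 hA2
    constructor
    · have evw : v₀ + w₀ = T N (v' + w') := by rw [hT.map_add, hTv', hTw']
      have hvw : af (v₀ + w₀) = T N (A.abs N N (v' + w')) := by rw [evw, hafT]
      have e : u₀ - af (v₀ + w₀) = T N (u' - A.abs N N (v' + w')) := by
        rw [hvw, ← hTu', ← St5.T_sub hT]
      rw [e, hafT, k1, hT.map_add, hTu', ← hvw]
    · have evw : v₀ - w₀ = T N (v' - w') := by rw [St5.T_sub hT, hTv', hTw']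
      have hvw : af (v₀ - w₀) = T N (A.abs N N (v' - w')) := by rw [evw, hafT]
      have e : u₀ - af (v₀ - w₀) = T N (u' - A.abs N N (v' - w')) := by
        rw [hvw, ← hTu', ← St5.T_sub hT]
      rw [e, hafT, k2, hT.map_add, hTu', ← hvw]
end
end

section
/- Let (𝔙, 𝔙⁺, |·|) be a non-degenerate absolutely ordered 𝔉-bimodule and let (V, {Mₙ(V)⁺}) be the matrix ordered space with V = 𝔍₁𝔙𝔍₁ and Mₙ(V)⁺ = Tₙ⁻¹(𝔍ₙ𝔙⁺𝔍ₙ). Define |v|ₙ := Tₙ⁻¹(|Tₙ(v)|) for v ∈ Mₙ(V). Then for all u ∈ M_m(V) and v ∈ Mₙ(V), one has |u ⊕ v|_{m+n} = |u|_m ⊕ |v|ₙ, and (V, {Mₙ(V)⁺}, {|·|ₙ}) is an absolutely matrix ordered space. -/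
noncomputable section

open scoped Matrix.Norms.L2Operator

section Statement6Aux

open Finset in
/-- Auxiliary summation lemma: summing a padded family. -/
lemma sum_pad {β : Type*} [AddCommMonoid β] {p N : ℕ} (h : p ≤ N) (f : Fin p → β) :
    (∑ k : Fin N, if hk : (k : ℕ) < p then f ⟨k, hk⟩ else 0) = ∑ k : Fin p, f k := by
  have h1 : (∑ k : Fin N, if hk : (k : ℕ) < p then f ⟨k, hk⟩ else 0)
      = ∑ k ∈ Finset.range N, (fun k : ℕ => if hk : k < p then f ⟨k, hk⟩ else 0) k :=
    Fin.sum_univ_eq_sum_range (fun k : ℕ => if hk : k < p then f ⟨k, hk⟩ else 0) N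
  have h2 : (∑ k : Fin p, f k)
      = ∑ k ∈ Finset.range p, (fun k : ℕ => if hk : k < p then f ⟨k, hk⟩ else 0) k := by
    rw [← Fin.sum_univ_eq_sum_range]
    exact Finset.sum_congr rfl fun k _ => by simp
  rw [h1, h2]
  refine (Finset.sum_subset (Finset.range_subset_range.2 h) ?_).symm
  intro k _ hk
  simp only [Finset.mem_range] at hk
  simp [dif_neg hk]

lemma sum_pad' {β : Type*} [AddCommMonoid β] {p N : ℕ} (h : p ≤ N)
    (g : Fin N → β) (f : Fin p → β)
    (hg : ∀ k : Fin N, g k = if hk : (k : ℕ) < p then f ⟨k, hk⟩ else 0) :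
    ∑ k : Fin N, g k = ∑ k : Fin p, f k := by
  calc ∑ k : Fin N, g k
      = ∑ k : Fin N, (if hk : (k : ℕ) < p then f ⟨k, hk⟩ else 0) :=
        Finset.sum_congr rfl fun k _ => hg k
    _ = ∑ k : Fin p, f k := sum_pad h f

/-- Padding a rectangular matrix with zeros. -/
def padM (N₁ N₂ : ℕ) {p q : ℕ} {α : Type*} [Zero α] (A : Matrix (Fin p) (Fin q) α) :
    Matrix (Fin N₁) (Fin N₂) α :=
  fun i j => if h : (i : ℕ) < p then (if h' : (j : ℕ) < q then A ⟨i, h⟩ ⟨j, h'⟩ else 0) else 0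

lemma isFin_embC {r m : ℕ} (a : Matrix (Fin r) (Fin m) ℂ) : IsFin (embC a) := by
  refine ⟨r + m, fun i j hij => ?_⟩
  unfold embC
  rcases hij with h | h
  · rw [dif_neg (by omega)]
  · by_cases hi : i < r
    · rw [dif_pos hi, dif_neg (by omega)]
    · rw [dif_neg hi]

lemma isFin_zero : IsFin (0 : FMat) := ⟨0, fun _ _ _ => rfl⟩

lemma isFin_add {a b : FMat} (ha : IsFin a) (hb : IsFin b) : IsFin (a + b) := by
  obtain ⟨n, hn⟩ := ha; obtain ⟨m, hm⟩ := hb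
  exact ⟨max n m, fun i j hij => by
    have h1 := hn i j (by omega)
    have h2 := hm i j (by omega)
    simp only [Pi.add_apply, h1, h2, add_zero]⟩

lemma isFin_smul (c : ℂ) {a : FMat} (ha : IsFin a) : IsFin (c • a) := by
  obtain ⟨n, hn⟩ := ha
  exact ⟨n, fun i j hij => by simp [hn i j hij]⟩

lemma isFin_fstar {a : FMat} (ha : IsFin a) : IsFin (fstar a) := by
  obtain ⟨n, hn⟩ := ha
  exact ⟨n, fun i j hij => by simp [fstar, hn j i (by omega)]⟩

lemma isFin_JMat (n : ℕ) : IsFin (JMat n) :=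
  ⟨n, fun i j hij => by
    simp only [JMat, ite_eq_right_iff, and_imp]
    intro h1 h2; omega⟩

lemma isFin_KMat (n : ℕ) : IsFin (KMat n) :=
  ⟨n + n, fun i j hij => by
    simp only [KMat, ite_eq_right_iff, and_imp]
    intro h1 h2; omega⟩

lemma isFin_sub {a b : FMat} (ha : IsFin a) (hb : IsFin b) : IsFin (a - b) := by
  rw [sub_eq_add_neg]
  have : -b = (-1 : ℂ) • b := by funext i j; simp
  rw [this]
  exact isFin_add ha (isFin_smul _ hb)

lemma embC_one (N : ℕ) : embC (1 : Matrix (Fin N) (Fin N) ℂ) = JMat N := by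
  funext i j
  simp only [embC, JMat]
  by_cases hi : i < N
  · by_cases hj : j < N
    · rw [dif_pos hi, dif_pos hj, Matrix.one_apply]
      by_cases hij : i = j
      · subst hij; simp [hi]
      · rw [if_neg (by simp [Fin.ext_iff]; omega), if_neg (by tauto)]
    · rw [dif_pos hi, dif_neg hj, if_neg (by omega)]
  · rw [dif_neg hi, if_neg (by omega)]

lemma fstar_embC {r m : ℕ} (a : Matrix (Fin r) (Fin m) ℂ) :
    fstar (embC a) = embC a.conjTranspose := by
  funext i j
  simp only [fstar, embC, Matrix.conjTranspose_apply, starRingEnd_apply]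
  by_cases hi : i < m
  · by_cases hj : j < r
    · rw [dif_pos hj, dif_pos hi, dif_pos hi, dif_pos hj]
    · rw [dif_neg hj, dif_pos hi, dif_neg hj, star_zero]
  · by_cases hj : j < r
    · rw [dif_pos hj, dif_neg hi, dif_neg hi, star_zero]
    · rw [dif_neg hj, dif_neg hi, star_zero]

lemma fmul_embC {r p s : ℕ} (a : Matrix (Fin r) (Fin p) ℂ) (b : Matrix (Fin p) (Fin s) ℂ) :
    fmul (embC a) (embC b) = embC (a * b) := by
  funext i k
  simp only [fmul]
  have hsupp : ∀ j ∉ Finset.range p, embC a i j * embC b j k = 0 := by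
    intro j hj
    simp only [Finset.mem_range, not_lt] at hj
    simp only [embC]
    by_cases hi : i < r
    · rw [dif_pos hi, dif_neg (by omega), zero_mul]
    · rw [dif_neg hi, zero_mul]
  rw [tsum_eq_sum hsupp]
  simp only [embC]
  by_cases hi : i < r
  · by_cases hk : k < s
    · rw [dif_pos hi, dif_pos hk, Matrix.mul_apply]
      rw [← Fin.sum_univ_eq_sum_range (fun j => (if h : i < r then (if h' : j < p then a ⟨i, h⟩ ⟨j, h'⟩ else 0) else 0) * (if h : j < p then (if h' : k < s then b ⟨j, h⟩ ⟨k, h'⟩ else 0) else 0)) p]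
      refine Finset.sum_congr rfl fun j _ => ?_
      rw [dif_pos hi, dif_pos j.isLt, dif_pos j.isLt, dif_pos hk]
    · rw [dif_pos hi, dif_neg hk]
      refine Finset.sum_eq_zero fun j hj => ?_
      simp only [Finset.mem_range] at hj
      rw [dif_pos hj, dif_neg hk, mul_zero]
  · rw [dif_neg hi]
    refine Finset.sum_eq_zero fun j hj => ?_
    rw [dif_neg hi, zero_mul]

lemma embC_padM {p q N₁ N₂ : ℕ} (h1 : p ≤ N₁) (h2 : q ≤ N₂)
    (A : Matrix (Fin p) (Fin q) ℂ) : embC (padM N₁ N₂ A) = embC A := by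
  funext i j
  simp only [embC, padM]
  by_cases hi : i < p
  · by_cases hj : j < q
    · rw [dif_pos (show i < N₁ by omega), dif_pos (show j < N₂ by omega),
        dif_pos hi, dif_pos hj]
    · rw [dif_pos hi, dif_neg hj]
      by_cases hj2 : j < N₂
      · rw [dif_pos (show i < N₁ by omega), dif_pos hj2, dif_pos hi, dif_neg hj]
      · rw [dif_pos (show i < N₁ by omega), dif_neg hj2]
  · rw [dif_neg hi]
    by_cases hi2 : i < N₁
    · rw [dif_pos hi2]
      by_cases hj2 : j < N₂
      · rw [dif_pos hj2, dif_neg hi]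
      · rw [dif_neg hj2]
    · rw [dif_neg hi2]

lemma fmul_smul_left (c : ℂ) (a b : FMat) : fmul (c • a) b = c • fmul a b := by
  funext i k
  simp only [fmul, Pi.smul_apply, smul_eq_mul]
  rw [← tsum_mul_left]
  congr 1; funext j; ring

lemma fmul_smul_right (c : ℂ) (a b : FMat) : fmul a (c • b) = c • fmul a b := by
  funext i k
  simp only [fmul, Pi.smul_apply, smul_eq_mul]
  rw [← tsum_mul_left]
  congr 1; funext j; ring

lemma fmul_JMat_JMat (n : ℕ) : fmul (JMat n) (JMat n) = JMat n := by
  rw [← embC_one, fmul_embC, Matrix.one_mul]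

lemma fmul_embC_JMat {N : ℕ} (a : Matrix (Fin N) (Fin N) ℂ) :
    fmul (embC a) (JMat N) = embC a := by
  rw [← embC_one, fmul_embC, Matrix.mul_one]

lemma fmul_JMat_embC {N : ℕ} (a : Matrix (Fin N) (Fin N) ℂ) :
    fmul (JMat N) (embC a) = embC a := by
  rw [← embC_one, fmul_embC, Matrix.one_mul]

lemma fstar_JMat (n : ℕ) : fstar (JMat n) = JMat n := by
  funext i j
  simp only [fstar, JMat]
  by_cases h : j = i ∧ j < n
  · rw [if_pos h, if_pos ⟨h.1.symm, by omega⟩, map_one]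
  · rw [if_neg h, map_zero, if_neg (by omega)]

lemma fstar_add (a b : FMat) : fstar (a + b) = fstar a + fstar b := by
  funext i j; simp [fstar]

lemma fstar_sub (a b : FMat) : fstar (a - b) = fstar a - fstar b := by
  funext i j; simp [fstar]

lemma fstar_fstar (a : FMat) : fstar (fstar a) = a := by
  funext i j; simp [fstar]

lemma fstar_zero : fstar (0 : FMat) = 0 := by
  funext i j; simp [fstar]

lemma fmul_KMat_JMat (o : ℕ) : fmul (KMat o) (JMat o) = 0 := by
  funext i k
  simp only [fmul, Pi.zero_apply]
  have : ∀ j : ℕ, KMat o i j * JMat o j k = 0 := by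
    intro j
    simp only [KMat, JMat]
    by_cases h1 : j = i + o ∧ i < o
    · rw [if_pos h1, if_neg (by omega), mul_zero]
    · rw [if_neg h1, zero_mul]
  simp only [this, tsum_zero]

lemma fmul_JMat_fstar_KMat (o : ℕ) : fmul (JMat o) (fstar (KMat o)) = 0 := by
  funext i k
  simp only [fmul, Pi.zero_apply]
  have : ∀ j : ℕ, JMat o i j * fstar (KMat o) j k = 0 := by
    intro j
    simp only [JMat, KMat, fstar]
    by_cases h1 : i = j ∧ i < o
    · rw [if_pos h1]
      rw [if_neg (by omega), map_zero, mul_zero]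
    · rw [if_neg h1, zero_mul]
  simp only [this, tsum_zero]

lemma fmul_KMat_fstar_KMat (o : ℕ) : fmul (KMat o) (fstar (KMat o)) = JMat o := by
  funext i k
  simp only [fmul]
  have hsingle : ∀ j : ℕ, j ≠ i + o → KMat o i j * fstar (KMat o) j k = 0 := by
    intro j hj
    simp only [KMat, fstar]
    rw [if_neg (by tauto), zero_mul]
  rw [tsum_eq_single (i + o) hsingle]
  simp only [KMat, fstar, JMat]
  split_ifs with h1 h2 h3 <;> simp_all <;> omega

section BimodLemmas

variable {𝕍 : Type*} [AddCommGroup 𝕍] [Module ℂ 𝕍] (M : FBimod 𝕍)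

lemma FBimod.lsmul_zero_right (a : FMat) : M.lsmul a 0 = 0 := by
  have := M.lsmul_add a 0 0
  rw [add_zero] at this
  exact (add_eq_left.1 this.symm)

lemma FBimod.rsmul_zero_left (b : FMat) : M.rsmul 0 b = 0 := by
  have := M.rsmul_add 0 0 b
  rw [add_zero] at this
  exact (add_eq_left.1 this.symm)

lemma FBimod.lsmul_zero_left (v : 𝕍) : M.lsmul 0 v = 0 := by
  have := M.add_lsmul 0 0 v isFin_zero isFin_zero
  rw [add_zero] at this
  exact (add_eq_left.1 this.symm)

lemma FBimod.rsmul_zero_right (v : 𝕍) : M.rsmul v 0 = 0 := by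
  have := M.rsmul_add' v 0 0 isFin_zero isFin_zero
  rw [add_zero] at this
  exact (add_eq_left.1 this.symm)

lemma FBimod.lsmul_neg (a : FMat) (v : 𝕍) : M.lsmul a (-v) = -M.lsmul a v := by
  have := M.lsmul_add a v (-v)
  rw [add_neg_cancel, M.lsmul_zero_right] at this
  exact eq_neg_of_add_eq_zero_right this.symm

lemma FBimod.rsmul_neg (v : 𝕍) (b : FMat) : M.rsmul (-v) b = -M.rsmul v b := by
  have := M.rsmul_add v (-v) b
  rw [add_neg_cancel, M.rsmul_zero_left] at this
  exact eq_neg_of_add_eq_zero_right this.symm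

lemma FBimod.lsmul_sub (a : FMat) (u v : 𝕍) :
    M.lsmul a (u - v) = M.lsmul a u - M.lsmul a v := by
  rw [sub_eq_add_neg, M.lsmul_add, M.lsmul_neg, sub_eq_add_neg]

lemma FBimod.rsmul_sub (u v : 𝕍) (b : FMat) :
    M.rsmul (u - v) b = M.rsmul u b - M.rsmul v b := by
  rw [sub_eq_add_neg, M.rsmul_add, M.rsmul_neg, sub_eq_add_neg]

lemma FBimod.conj_sub (a : FMat) (u v : 𝕍) :
    M.conj a (u - v) = M.conj a u - M.conj a v := by
  unfold FBimod.conj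
  rw [M.rsmul_sub, M.lsmul_sub]

lemma FBimod.sub_lsmul {a b : FMat} (ha : IsFin a) (hb : IsFin b) (v : 𝕍) :
    M.lsmul (a - b) v = M.lsmul a v - M.lsmul b v := by
  have hneg : -b = (-1 : ℂ) • b := by funext i j; simp
  rw [sub_eq_add_neg, hneg, M.add_lsmul a _ v ha (isFin_smul _ hb),
    M.smul_lsmul (-1) b v hb, neg_one_smul, sub_eq_add_neg]

lemma FBimod.rsmul_sub' {a b : FMat} (ha : IsFin a) (hb : IsFin b) (v : 𝕍) :
    M.rsmul v (a - b) = M.rsmul v a - M.rsmul v b := by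
  have hneg : -b = (-1 : ℂ) • b := by funext i j; simp
  rw [sub_eq_add_neg, hneg, M.rsmul_add' v a _ ha (isFin_smul _ hb),
    M.smul_rsmul (-1) v b hb, neg_one_smul, sub_eq_add_neg]

/-- If `z` lives at level `N` then left multiplication by `𝔍_N` fixes it. -/
lemma FBimod.lsmulJ {N : ℕ} {z : 𝕍} (hz : M.cut N z = z) : M.lsmul (JMat N) z = z := by
  conv_lhs => rw [← hz]
  unfold FBimod.cut
  rw [← M.mul_lsmul _ _ _ (isFin_JMat N) (isFin_JMat N), fmul_JMat_JMat]
  exact hz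

lemma FBimod.rsmulJ {N : ℕ} {z : 𝕍} (hz : M.cut N z = z) : M.rsmul z (JMat N) = z := by
  conv_lhs => rw [← hz]
  unfold FBimod.cut
  rw [M.lsmul_rsmul _ _ _ (isFin_JMat N) (isFin_JMat N),
    ← M.rsmul_mul _ _ _ (isFin_JMat N) (isFin_JMat N), fmul_JMat_JMat]
  exact hz

lemma FBimod.cut_mono {m N : ℕ} (h : m ≤ N) {z : 𝕍} (hz : M.cut m z = z) :
    M.cut N z = z := by
  have hJm : JMat m = embC (padM N N (1 : Matrix (Fin m) (Fin m) ℂ)) := by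
    rw [embC_padM h h, embC_one]
  have h1 : fmul (JMat N) (JMat m) = JMat m := by
    rw [hJm, fmul_JMat_embC]
  have h2 : fmul (JMat m) (JMat N) = JMat m := by
    rw [hJm, fmul_embC_JMat]
  conv_lhs => rw [← hz]
  unfold FBimod.cut
  rw [M.lsmul_rsmul _ _ _ (isFin_JMat m) (isFin_JMat N),
    ← M.mul_lsmul _ _ _ (isFin_JMat N) (isFin_JMat m), h1,
    ← M.rsmul_mul _ _ _ (isFin_JMat m) (isFin_JMat N), h2]
  exact hz

lemma FBimod.ord_le {N : ℕ} {z : 𝕍} (hz : M.cut N z = z) : M.ord z ≤ N :=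
  Nat.sInf_le hz

lemma FBimod.cut_ord (z : 𝕍) : M.cut (M.ord z) z = z := by
  have hne : {n | M.cut n z = z}.Nonempty := M.nondeg z
  exact Nat.sInf_mem hne

lemma FBimod.cut_zero_eq {z : 𝕍} (hz : M.cut 0 z = z) : z = 0 := by
  have hJ0 : JMat 0 = 0 := by
    funext i j; simp only [JMat, Pi.zero_apply]
    rw [if_neg (by omega)]
  rw [← hz]
  unfold FBimod.cut
  rw [hJ0, M.lsmul_zero_left]

lemma FBimod.conj_zero (a : FMat) : M.conj a 0 = 0 := by
  unfold FBimod.conj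
  rw [M.rsmul_zero_left, M.lsmul_zero_right]

/-- `conj (embC B) ∘ conj (embC A) = conj (embC (A * B))` for square matrices. -/
lemma FBimod.conj_embC_embC {N : ℕ} (A B : Matrix (Fin N) (Fin N) ℂ) (x : 𝕍) :
    M.conj (embC B) (M.conj (embC A) x) = M.conj (embC (A * B)) x := by
  unfold FBimod.conj
  rw [M.lsmul_rsmul _ _ _ (isFin_fstar (isFin_embC A)) (isFin_embC B),
    ← M.mul_lsmul _ _ _ (isFin_fstar (isFin_embC B)) (isFin_fstar (isFin_embC A)),
    ← M.rsmul_mul _ _ _ (isFin_embC A) (isFin_embC B)]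
  rw [fstar_embC, fstar_embC, fmul_embC, fmul_embC, fstar_embC,
    Matrix.conjTranspose_mul]

lemma FBimod.conj_JMat {N : ℕ} {x : 𝕍} (hx : M.cut N x = x) :
    M.conj (JMat N) x = x := by
  unfold FBimod.conj
  rw [fstar_JMat]
  exact hx

lemma FBimod.cut_conj {N : ℕ} (A : Matrix (Fin N) (Fin N) ℂ) (x : 𝕍) :
    M.cut N (M.conj (embC A) x) = M.conj (embC A) x := by
  unfold FBimod.cut FBimod.conj
  rw [fstar_embC]
  rw [M.lsmul_rsmul _ _ _ (isFin_embC _) (isFin_JMat N),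
    ← M.mul_lsmul _ _ _ (isFin_JMat N) (isFin_embC _), fmul_JMat_embC,
    ← M.rsmul_mul _ _ _ (isFin_embC A) (isFin_JMat N), fmul_embC_JMat]

end BimodLemmas

lemma FBimod.cut_smul_of_cut {𝕍 : Type*} [AddCommGroup 𝕍] [Module ℂ 𝕍] (M : FBimod 𝕍)
    {N : ℕ} {z : 𝕍} (hz : M.cut N z = z) (c : ℂ) : M.cut N (c • z) = c • z := by
  have h1 : c • z = M.rsmul z (c • JMat N) := by
    rw [M.smul_rsmul c z (JMat N) (isFin_JMat N), M.rsmulJ hz]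
  have h2 : c • z = M.lsmul (c • JMat N) z := (M.smul_compat c N z hz).symm
  unfold FBimod.cut
  have hr : M.rsmul (c • z) (JMat N) = c • z := by
    conv_lhs => rw [h1]
    rw [← M.rsmul_mul _ _ _ (isFin_smul c (isFin_JMat N)) (isFin_JMat N),
      fmul_smul_left, fmul_JMat_JMat, ← h1]
  rw [hr]
  conv_lhs => rw [h2]
  rw [← M.mul_lsmul _ _ _ (isFin_JMat N) (isFin_smul c (isFin_JMat N)),
    fmul_smul_right, fmul_JMat_JMat, ← h2]

section ConeLemmas

variable {𝕍 : Type*} [AddCommGroup 𝕍] [Module ℂ 𝕍] {M : FBimod 𝕍} {C : Set 𝕍}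
  {ab : 𝕍 → 𝕍} (hab : M.IsAbsOrd C ab)

include hab

lemma FBimod.IsAbsOrd.zero_mem : (0 : 𝕍) ∈ C := by
  have h := hab.cone.2.2 (ab 0) (hab.abs_mem 0) 0 isFin_zero
  unfold FBimod.conj at h
  rwa [fstar_zero, M.rsmul_zero_right, M.lsmul_zero_left] at h

lemma FBimod.IsAbsOrd.ab_zero : ab (0 : 𝕍) = 0 := hab.abs_of_mem 0 hab.zero_mem

lemma FBimod.IsAbsOrd.smul_mem {z : 𝕍} (hz : z ∈ C) {r : ℝ} (hr : 0 ≤ r) :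
    (r : ℂ) • z ∈ C := by
  obtain ⟨N, hN⟩ := M.nondeg z
  set c : ℂ := ((Real.sqrt r : ℝ) : ℂ) with hc
  have h := hab.cone.2.2 z hz (c • JMat N) (isFin_smul c (isFin_JMat N))
  have hstar : fstar (c • JMat N) = (starRingEnd ℂ c) • JMat N := by
    funext i j
    simp only [fstar, Pi.smul_apply, smul_eq_mul, map_mul]
    congr 1
    simp only [JMat]
    split_ifs with h1 h2 <;> first | (simp; done) | (exfalso; omega)
  have hrs : M.rsmul z (c • JMat N) = c • z := by
    rw [M.smul_rsmul c z (JMat N) (isFin_JMat N), M.rsmulJ hN]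
  have hcut : M.cut N (c • z) = c • z := M.cut_smul_of_cut hN c
  have hls : M.lsmul ((starRingEnd ℂ c) • JMat N) (c • z) = (starRingEnd ℂ c) • (c • z) :=
    M.smul_compat _ N (c • z) hcut
  unfold FBimod.conj at h
  rw [hstar, hrs, hls] at h
  have : (starRingEnd ℂ c) • c • z = (r : ℂ) • z := by
    rw [smul_smul, hc]
    congr 1
    rw [Complex.conj_ofReal, ← Complex.ofReal_mul, Real.mul_self_sqrt hr]
  rwa [this] at h

lemma FBimod.IsAbsOrd.proper {z : 𝕍} (hz : z ∈ C) (hz' : -z ∈ C) : z = 0 := by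
  have h1 : ab (-z) = z := by
    have := hab.absorb 0 hab.zero_mem 0 hab.zero_mem z hz
      (by rw [sub_zero, hab.ab_zero, add_zero]) (by rwa [zero_sub])
    rwa [zero_sub, zero_add] at this
  have h2 : ab (-z) = -z := hab.abs_of_mem (-z) hz'
  have h3 : z = -z := h1.symm.trans h2
  have h4 : (2 : ℂ) • z = 0 := by
    rw [two_smul]
    nth_rewrite 2 [h3]
    exact add_neg_cancel z
  calc z = ((2:ℂ)⁻¹ * 2) • z := by norm_num
  _ = (2:ℂ)⁻¹ • ((2:ℂ) • z) := by rw [mul_smul]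
  _ = 0 := by rw [h4, smul_zero]

lemma FBimod.IsAbsOrd.cut_abs {N : ℕ} {z : 𝕍} (hz : M.cut N z = z) :
    M.cut N (ab z) = ab z := by
  have h1 : M.cut (M.ord (ab z)) (ab z) = ab z := M.cut_ord (ab z)
  have h2 : M.ord (ab z) ≤ M.ord z := hab.ord_abs_le z
  have h3 : M.ord z ≤ N := M.ord_le hz
  exact M.cut_mono (le_trans h2 h3) h1

end ConeLemmas

section NormLemmas

/-- The rectangular "inclusion" matrix. -/
def inclM (p q : ℕ) : Matrix (Fin p) (Fin q) ℂ :=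
  fun i j => if (i : ℕ) = (j : ℕ) then 1 else 0

lemma inclM_mul_conjTranspose {p q : ℕ} (h : p ≤ q) :
    inclM p q * (inclM p q).conjTranspose = 1 := by
  ext i j
  rw [Matrix.mul_apply]
  simp only [inclM, Matrix.conjTranspose_apply]
  rw [Finset.sum_eq_single (⟨(i : ℕ), lt_of_lt_of_le i.isLt h⟩ : Fin q)]
  · simp only [Matrix.one_apply, Fin.ext_iff]
    split_ifs with h1 h2 h3 <;> first | (simp; done) | (exfalso; omega)
  · intro k _ hk
    have hik : (i : ℕ) ≠ (k : ℕ) := by simp [Fin.ext_iff] at hk; omega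
    rw [if_neg hik, zero_mul]
  · intro hmem; exact absurd (Finset.mem_univ _) hmem

lemma norm_idem_le {n : ℕ} (P : Matrix (Fin n) (Fin n) ℂ)
    (h1 : P.conjTranspose = P) (h2 : P * P = P) : ‖P‖ ≤ 1 := by
  have key : ‖P‖ * ‖P‖ = ‖P‖ := by
    rw [← Matrix.l2_opNorm_conjTranspose_mul_self P, h1, h2]
  nlinarith [norm_nonneg P]

lemma norm_inclM_le {p q : ℕ} (h : p ≤ q) : ‖inclM p q‖ ≤ 1 := by
  have key : ‖inclM p q‖ * ‖inclM p q‖ ≤ 1 := by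
    rw [← Matrix.l2_opNorm_conjTranspose_mul_self (inclM p q)]
    refine norm_idem_le _ (by rw [Matrix.conjTranspose_mul,
      Matrix.conjTranspose_conjTranspose]) ?_
    calc (inclM p q).conjTranspose * inclM p q * ((inclM p q).conjTranspose * inclM p q)
        = (inclM p q).conjTranspose * (inclM p q * (inclM p q).conjTranspose) * inclM p q := by
          simp only [Matrix.mul_assoc]
      _ = (inclM p q).conjTranspose * inclM p q := by
          rw [inclM_mul_conjTranspose h, Matrix.mul_one]
  nlinarith [norm_nonneg (inclM p q)]

lemma norm_one_matrix {N : ℕ} (hN : 0 < N) : ‖(1 : Matrix (Fin N) (Fin N) ℂ)‖ = 1 := by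
  have key : ‖(1 : Matrix (Fin N) (Fin N) ℂ)‖ * ‖(1 : Matrix (Fin N) (Fin N) ℂ)‖
      = ‖(1 : Matrix (Fin N) (Fin N) ℂ)‖ := by
    rw [← Matrix.l2_opNorm_conjTranspose_mul_self (1 : Matrix (Fin N) (Fin N) ℂ),
      Matrix.conjTranspose_one, Matrix.one_mul]
  have hne : (1 : Matrix (Fin N) (Fin N) ℂ) ≠ 0 := by
    intro h
    have := congrFun (congrFun h ⟨0, hN⟩) ⟨0, hN⟩
    simp [Matrix.one_apply] at this
  have hnorm : ‖(1 : Matrix (Fin N) (Fin N) ℂ)‖ ≠ 0 := by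
    simpa using hne
  exact mul_left_cancel₀ hnorm (by rw [key, mul_one])

lemma norm_unitary {N : ℕ} (hN : 0 < N) (τ : Matrix (Fin N) (Fin N) ℂ)
    (h : τ.conjTranspose * τ = 1) : ‖τ‖ = 1 := by
  have key : ‖τ‖ * ‖τ‖ = 1 := by
    rw [← Matrix.l2_opNorm_conjTranspose_mul_self τ, h, norm_one_matrix hN]
  rcases mul_self_eq_one_iff.1 key with h1 | h1
  · exact h1
  · exfalso; have := norm_nonneg τ; rw [h1] at this; linarith

lemma padM_self {n : ℕ} {α : Type*} [Zero α] (A : Matrix (Fin n) (Fin n) α) :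
    padM n n A = A := by
  funext i j
  simp only [padM]
  rw [dif_pos i.isLt, dif_pos j.isLt]

lemma padM_eq_incl_mul {p n : ℕ} (hp : p ≤ n) (A : Matrix (Fin n) (Fin n) ℂ) :
    padM p p A = inclM p n * A * (inclM p n).conjTranspose := by
  funext i j
  rw [Matrix.mul_apply]
  have hA : ∀ k : Fin n, (inclM p n * A) i k
      = A ⟨(i : ℕ), lt_of_lt_of_le i.isLt hp⟩ k := by
    intro k
    rw [Matrix.mul_apply]
    rw [Finset.sum_eq_single (⟨(i : ℕ), lt_of_lt_of_le i.isLt hp⟩ : Fin n)]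
    · rw [inclM]; rw [if_pos rfl, one_mul]
    · intro b _ hb
      rw [inclM]; rw [if_neg (by simp [Fin.ext_iff] at hb ⊢; omega), zero_mul]
    · intro hmem; exact absurd (Finset.mem_univ _) hmem
  rw [Finset.sum_congr rfl (fun k _ => by rw [hA k])]
  rw [Finset.sum_eq_single (⟨(j : ℕ), lt_of_lt_of_le j.isLt hp⟩ : Fin n)]
  · have hi' := lt_of_lt_of_le i.isLt hp
    have hj' := lt_of_lt_of_le j.isLt hp
    simp [Matrix.conjTranspose_apply, inclM, padM, hi', hj']
  · intro b _ hb
    have hjb : (j : ℕ) ≠ (b : ℕ) := by simp [Fin.ext_iff] at hb; omega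
    simp [Matrix.conjTranspose_apply, inclM, hjb]
  · intro hmem; exact absurd (Finset.mem_univ _) hmem

lemma padM_eq_mul_incl {p n : ℕ} (hn : n ≤ p) (A : Matrix (Fin n) (Fin n) ℂ) :
    padM p p A = (inclM n p).conjTranspose * A * inclM n p := by
  funext i j
  rw [Matrix.mul_apply]
  have hA : ∀ k : Fin n, ((inclM n p).conjTranspose * A) i k
      = if h : (i : ℕ) < n then A ⟨(i : ℕ), h⟩ k else 0 := by
    intro k
    rw [Matrix.mul_apply]
    by_cases hi : (i : ℕ) < n
    · rw [dif_pos hi]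
      rw [Finset.sum_eq_single (⟨(i : ℕ), hi⟩ : Fin n)]
      · simp [Matrix.conjTranspose_apply, inclM]
      · intro b _ hb
        have hib : (b : ℕ) ≠ (i : ℕ) := by simp [Fin.ext_iff] at hb; omega
        simp [Matrix.conjTranspose_apply, inclM, hib]
      · intro hmem; exact absurd (Finset.mem_univ _) hmem
    · rw [dif_neg hi]
      refine Finset.sum_eq_zero fun b _ => ?_
      have hbi : (b : ℕ) ≠ (i : ℕ) := by omega
      simp [Matrix.conjTranspose_apply, inclM, hbi]
  rw [Finset.sum_congr rfl (fun k _ => by rw [hA k])]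
  by_cases hi : (i : ℕ) < n
  · by_cases hj : (j : ℕ) < n
    · have hsum : (∑ k : Fin n, (if h : (i : ℕ) < n then A ⟨i, h⟩ k else 0) * inclM n p k j)
          = A ⟨(i : ℕ), hi⟩ ⟨(j : ℕ), hj⟩ := by
        rw [Finset.sum_eq_single (⟨(j : ℕ), hj⟩ : Fin n)]
        · simp [inclM, hi]
        · intro b _ hb
          have hbj : (b : ℕ) ≠ (j : ℕ) := by simp [Fin.ext_iff] at hb; omega
          simp [inclM, hbj]
        · intro hmem; exact absurd (Finset.mem_univ _) hmem
      rw [hsum]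
      simp [padM, hi, hj]
    · have hsum : (∑ k : Fin n, (if h : (i : ℕ) < n then A ⟨i, h⟩ k else 0) * inclM n p k j)
          = 0 := by
        refine Finset.sum_eq_zero fun b _ => ?_
        have hbj : (b : ℕ) ≠ (j : ℕ) := by omega
        simp [inclM, hbj]
      rw [hsum]
      simp [padM, hj]
  · have hsum : (∑ k : Fin n, (if h : (i : ℕ) < n then A ⟨i, h⟩ k else 0) * inclM n p k j)
        = 0 := by
      refine Finset.sum_eq_zero fun b _ => ?_
      simp [hi]
    rw [hsum]
    simp [padM, hi]

lemma norm_padM_le {p n : ℕ} (A : Matrix (Fin n) (Fin n) ℂ) :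
    ‖(padM p p A : Matrix (Fin p) (Fin p) ℂ)‖ ≤ ‖A‖ := by
  rcases le_or_gt p n with hp | hp
  · rw [padM_eq_incl_mul hp]
    have h1 : ‖inclM p n‖ ≤ 1 := norm_inclM_le hp
    have h2 := Matrix.l2_opNorm_mul (inclM p n * A) (inclM p n).conjTranspose
    have h3 := Matrix.l2_opNorm_mul (inclM p n) A
    rw [Matrix.l2_opNorm_conjTranspose] at h2
    nlinarith [norm_nonneg A, norm_nonneg (inclM p n), norm_nonneg (inclM p n * A)]
  · rw [padM_eq_mul_incl hp.le]
    have h1 : ‖inclM n p‖ ≤ 1 := norm_inclM_le hp.le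
    have h2 := Matrix.l2_opNorm_mul ((inclM n p).conjTranspose * A) (inclM n p)
    have h3 := Matrix.l2_opNorm_mul (inclM n p).conjTranspose A
    rw [Matrix.l2_opNorm_conjTranspose] at h3
    nlinarith [norm_nonneg A, norm_nonneg (inclM n p),
      norm_nonneg ((inclM n p).conjTranspose * A)]

lemma fnorm_embC {n : ℕ} (A : Matrix (Fin n) (Fin n) ℂ) : fnorm (embC A) = ‖A‖ := by
  have hblock : ∀ p : ℕ,
      (Matrix.of fun i j : Fin p => embC A i j) = padM p p A := by
    intro p
    funext i j
    rfl
  unfold fnorm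
  have hb : ∀ p : ℕ, ‖(Matrix.of fun i j : Fin p => embC A i j :
      Matrix (Fin p) (Fin p) ℂ)‖ ≤ ‖A‖ := by
    intro p; rw [hblock p]; exact norm_padM_le A
  refine le_antisymm (ciSup_le hb) ?_
  have hbdd : BddAbove (Set.range fun p : ℕ =>
      ‖(Matrix.of fun i j : Fin p => embC A i j : Matrix (Fin p) (Fin p) ℂ)‖) := by
    refine ⟨‖A‖, ?_⟩
    rintro x ⟨p, rfl⟩
    exact hb p
  have := le_ciSup hbdd n
  rwa [hblock n, padM_self] at this

end NormLemmas

section TLemmas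

variable {V 𝕍 : Type*} [AddCommGroup V] [Module ℂ V] [StarAddMonoid V] [StarModule ℂ V]
  [AddCommGroup 𝕍] [Module ℂ 𝕍] {M : FBimod 𝕍}
  {T : ∀ n : ℕ, Matrix (Fin n) (Fin n) V → 𝕍}

lemma IsMatLimit.T_zero (hT : IsMatLimit V M T) (n : ℕ) : T n 0 = 0 := by
  have h := hT.map_add n 0 0
  rw [add_zero] at h
  exact (add_eq_left.1 h.symm)

lemma IsMatLimit.T_neg (hT : IsMatLimit V M T) (n : ℕ) (v : Matrix (Fin n) (Fin n) V) :
    T n (-v) = -T n v := by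
  have h := hT.map_smul n (-1) v
  rwa [neg_one_smul, neg_one_smul] at h

lemma IsMatLimit.T_sub (hT : IsMatLimit V M T) (n : ℕ) (u v : Matrix (Fin n) (Fin n) V) :
    T n (u - v) = T n u - T n v := by
  rw [sub_eq_add_neg, hT.map_add, hT.T_neg, sub_eq_add_neg]

lemma IsMatLimit.Tcast (hT : IsMatLimit V M T) {a b : ℕ} (h : a = b)
    (v : Matrix (Fin a) (Fin a) V) :
    T b (Matrix.of fun i j : Fin b => v (Fin.cast h.symm i) (Fin.cast h.symm j)) = T a v := by
  subst h
  rfl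

lemma IsMatLimit.T_padM (hT : IsMatLimit V M T) {n N : ℕ} (h : n ≤ N)
    (v : Matrix (Fin n) (Fin n) V) : T N (padM N N v) = T n v := by
  have hdecomp : n + (N - n) = N := by omega
  have e1 := hT.embed n (N - n) v
  have e2 : padM N N v = Matrix.of fun i j : Fin N =>
      dsum v (0 : Matrix (Fin (N - n)) (Fin (N - n)) V)
        (Fin.cast hdecomp.symm i) (Fin.cast hdecomp.symm j) := by
    funext i j
    simp only [padM, dsum, Matrix.of_apply, Fin.coe_cast]
    split_ifs <;> simp
  rw [e2, hT.Tcast hdecomp (dsum v 0), e1]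

lemma IsMatLimit.actP (hT : IsMatLimit V M T) {n N : ℕ} (h : n ≤ N)
    (A B : Matrix (Fin N) (Fin N) ℂ) (v : Matrix (Fin n) (Fin n) V) :
    M.lsmul (embC A) (M.rsmul (T n v) (embC B)) = T N (aSmul A (smulB (padM N N v) B)) := by
  rw [← hT.T_padM h v]
  exact (hT.act N A B (padM N N v)).symm

end TLemmas

section MainLemmas

variable {𝕍 : Type*} [AddCommGroup 𝕍] [Module ℂ 𝕍] {M : FBimod 𝕍} {C : Set 𝕍} {ab : 𝕍 → 𝕍}

lemma FBimod.IsAbsOrd.leftInv (hab : M.IsAbsOrd C ab) {N : ℕ} (hN : 0 < N)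
    (τ : Matrix (Fin N) (Fin N) ℂ) (h1 : τ.conjTranspose * τ = 1)
    (x : 𝕍) (hx : M.cut N x = x) :
    ab (M.lsmul (embC τ) x) = ab x := by
  have h2 : τ * τ.conjTranspose = 1 := mul_eq_one_comm.mp h1
  have hxr : M.rsmul x (JMat N) = x := M.rsmulJ hx
  have step : ∀ σ : Matrix (Fin N) (Fin N) ℂ, fnorm (embC σ) = 1 → ∀ y : 𝕍,
      M.cut N y = y → ab y - ab (M.lsmul (embC σ) y) ∈ C := by
    intro σ hσ y hy
    have h := hab.abs_smul_le (embC σ) (JMat N) (isFin_embC σ) (isFin_JMat N) y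
    rwa [hσ, M.rsmulJ (hab.cut_abs hy), M.rsmulJ hy, hab.abs_of_mem _ (hab.abs_mem y),
      Complex.ofReal_one, one_smul] at h
  have hnorm : fnorm (embC τ) = 1 := by rw [fnorm_embC]; exact norm_unitary hN τ h1
  have hnorm' : fnorm (embC τ.conjTranspose) = 1 := by
    rw [fnorm_embC]
    exact norm_unitary hN _ (by rw [Matrix.conjTranspose_conjTranspose]; exact h2)
  have hx' : M.cut N (M.lsmul (embC τ) x) = M.lsmul (embC τ) x := by
    unfold FBimod.cut
    rw [M.lsmul_rsmul _ _ _ (isFin_embC τ) (isFin_JMat N), hxr,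
      ← M.mul_lsmul _ _ _ (isFin_JMat N) (isFin_embC τ), fmul_JMat_embC]
  have d1 : ab x - ab (M.lsmul (embC τ) x) ∈ C := step τ hnorm x hx
  have d2 := step τ.conjTranspose hnorm' (M.lsmul (embC τ) x) hx'
  have hcomp : M.lsmul (embC τ.conjTranspose) (M.lsmul (embC τ) x) = x := by
    rw [← M.mul_lsmul _ _ _ (isFin_embC _) (isFin_embC _), fmul_embC, h1, embC_one,
      M.lsmulJ hx]
  rw [hcomp] at d2
  have h0 : ab x - ab (M.lsmul (embC τ) x) = 0 :=
    hab.proper d1 (by rw [neg_sub]; exact d2)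
  exact (sub_eq_zero.mp h0).symm

lemma FBimod.IsAbsOrd.cut_rsmul_embC (hab : M.IsAbsOrd C ab) {N : ℕ}
    (σ : Matrix (Fin N) (Fin N) ℂ) {w : 𝕍} (hw : M.cut N w = w) :
    M.cut N (M.rsmul w (embC σ)) = M.rsmul w (embC σ) := by
  unfold FBimod.cut
  rw [← M.rsmul_mul _ _ _ (isFin_embC σ) (isFin_JMat N), fmul_embC_JMat,
    ← M.lsmul_rsmul _ _ _ (isFin_JMat N) (isFin_embC σ), M.lsmulJ hw]

lemma FBimod.IsAbsOrd.conjInv (hab : M.IsAbsOrd C ab) {N : ℕ}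
    (σ : Matrix (Fin N) (Fin N) ℂ) (h1 : σ.conjTranspose * σ = 1)
    (x : 𝕍) (hx : M.cut N x = x) :
    ab (M.conj (embC σ) x) = M.conj (embC σ) (ab x) := by
  rcases Nat.eq_zero_or_pos N with hN0 | hN
  · subst hN0
    have hx0 : x = 0 := M.cut_zero_eq hx
    rw [hx0, M.conj_zero, hab.ab_zero, M.conj_zero]
  · have h2 : σ * σ.conjTranspose = 1 := mul_eq_one_comm.mp h1
    have key : ∀ σ' : Matrix (Fin N) (Fin N) ℂ, σ'.conjTranspose * σ' = 1 →
        σ' * σ'.conjTranspose = 1 → ∀ z : 𝕍, M.cut N z = z →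
        M.conj (embC σ') (ab z) - ab (M.conj (embC σ') z) ∈ C := by
      intro σ' hu1 hu2 z hz
      have hu2' : σ'.conjTranspose.conjTranspose * σ'.conjTranspose = 1 := by
        rw [Matrix.conjTranspose_conjTranspose]; exact hu2
      have e1 : ab (M.conj (embC σ') z) = ab (M.rsmul z (embC σ')) := by
        unfold FBimod.conj
        rw [fstar_embC]
        exact hab.leftInv hN σ'.conjTranspose hu2' _ (hab.cut_rsmul_embC σ' hz)
      have hPmem : M.conj (embC σ') (ab z) ∈ C :=
        hab.cone.2.2 (ab z) (hab.abs_mem z) _ (isFin_embC σ')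
      have e2 : ab (M.rsmul (ab z) (embC σ')) = M.conj (embC σ') (ab z) := by
        have hl := hab.leftInv hN σ'.conjTranspose hu2'
          (M.rsmul (ab z) (embC σ')) (hab.cut_rsmul_embC σ' (hab.cut_abs hz))
        have hconj : M.lsmul (embC σ'.conjTranspose) (M.rsmul (ab z) (embC σ'))
            = M.conj (embC σ') (ab z) := by
          unfold FBimod.conj; rw [fstar_embC]
        rw [hconj] at hl
        rw [← hl, hab.abs_of_mem _ hPmem]
      have h := hab.abs_smul_le (JMat N) (embC σ') (isFin_JMat N) (isFin_embC σ') z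
      have hJn : fnorm (JMat N) = 1 := by
        rw [← embC_one, fnorm_embC, norm_one_matrix hN]
      have hls : M.lsmul (JMat N) (M.rsmul z (embC σ')) = M.rsmul z (embC σ') :=
        M.lsmulJ (hab.cut_rsmul_embC σ' hz)
      rwa [hJn, Complex.ofReal_one, one_smul, hls, e2, ← e1] at h
    have d1 := key σ h1 h2 x hx
    have hcutY : M.cut N (M.conj (embC σ) x) = M.conj (embC σ) x := M.cut_conj σ x
    have d2 := key σ.conjTranspose
      (by rw [Matrix.conjTranspose_conjTranspose]; exact h2)
      (by rw [Matrix.conjTranspose_conjTranspose]; exact h1)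
      (M.conj (embC σ) x) hcutY
    have hYback : M.conj (embC σ.conjTranspose) (M.conj (embC σ) x) = x := by
      rw [M.conj_embC_embC σ σ.conjTranspose x, h2, embC_one, M.conj_JMat hx]
    rw [hYback] at d2
    have d2' := hab.cone.2.2 _ d2 (embC σ) (isFin_embC σ)
    rw [M.conj_sub] at d2'
    have hcomp2 : M.conj (embC σ)
        (M.conj (embC σ.conjTranspose) (ab (M.conj (embC σ) x)))
        = ab (M.conj (embC σ) x) := by
      rw [M.conj_embC_embC σ.conjTranspose σ _, h1, embC_one,
        M.conj_JMat (hab.cut_abs hcutY)]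
    rw [hcomp2] at d2'
    have h0 := hab.proper d1 (by rw [neg_sub]; exact d2')
    exact (sub_eq_zero.mp h0).symm

lemma embC_smul_one (n : ℕ) (c : ℂ) :
    embC (c • (1 : Matrix (Fin n) (Fin n) ℂ)) = c • JMat n := by
  funext i j
  simp only [embC, JMat, Matrix.smul_apply, Matrix.one_apply, Pi.smul_apply, smul_eq_mul,
    Fin.mk.injEq]
  split_ifs <;> first | (simp; done) | (exfalso; omega)

lemma FBimod.IsAbsOrd.abs_real_smul_V {𝕍 : Type*} [AddCommGroup 𝕍] [Module ℂ 𝕍]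
    {M : FBimod 𝕍} {C : Set 𝕍} {ab : 𝕍 → 𝕍} (hab : M.IsAbsOrd C ab) {n : ℕ} {x : 𝕍}
    (hx : M.cut n x = x) (k : ℝ) :
    ab ((k : ℂ) • x) = ((|k| : ℝ) : ℂ) • ab x := by
  rcases Nat.eq_zero_or_pos n with h0 | hn
  · subst h0
    have hx0 : x = 0 := M.cut_zero_eq hx
    rw [hx0, smul_zero, hab.ab_zero, smul_zero]
  by_cases hk : k = 0
  · subst hk
    simp [hab.ab_zero]
  have step : ∀ r : ℝ, ∀ y : 𝕍, M.cut n y = y →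
      ((|r| : ℝ) : ℂ) • ab y - ab ((r : ℂ) • y) ∈ C := by
    intro r y hy
    have h := hab.abs_smul_le (embC ((r : ℂ) • (1 : Matrix (Fin n) (Fin n) ℂ)))
      (JMat n) (isFin_embC _) (isFin_JMat n) y
    have hf : fnorm (embC ((r : ℂ) • (1 : Matrix (Fin n) (Fin n) ℂ))) = |r| := by
      rw [fnorm_embC, norm_smul, Complex.norm_real, Real.norm_eq_abs,
        norm_one_matrix hn, mul_one]
    have hls : M.lsmul (embC ((r : ℂ) • (1 : Matrix (Fin n) (Fin n) ℂ)))
        (M.rsmul y (JMat n)) = (r : ℂ) • y := by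
      rw [M.rsmulJ hy, embC_smul_one, M.smul_compat _ n y hy]
    rw [hf, hls, M.rsmulJ (hab.cut_abs hy), hab.abs_of_mem _ (hab.abs_mem y)] at h
    exact h
  have d1 := step k x hx
  have d2 := step k⁻¹ ((k : ℂ) • x) (M.cut_smul_of_cut hx _)
  have hsimp : ((k⁻¹ : ℝ) : ℂ) • ((k : ℂ) • x) = x := by
    rw [smul_smul, ← Complex.ofReal_mul, inv_mul_cancel₀ hk, Complex.ofReal_one, one_smul]
  rw [hsimp] at d2
  have d2' := hab.smul_mem d2 (abs_nonneg k)
  rw [smul_sub, smul_smul, ← Complex.ofReal_mul, abs_inv,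
    mul_inv_cancel₀ (abs_ne_zero.2 hk), Complex.ofReal_one, one_smul] at d2'
  have h0 := hab.proper d1 (by rw [neg_sub]; exact d2')
  exact (sub_eq_zero.mp h0).symm

lemma FBimod.IsAbsOrd.abs_add_self_V {𝕍 : Type*} [AddCommGroup 𝕍] [Module ℂ 𝕍]
    {M : FBimod 𝕍} {C : Set 𝕍} {ab : 𝕍 → 𝕍} (hab : M.IsAbsOrd C ab) (x : 𝕍)
    (hsa : M.star x = x) : ab x + x ∈ C ∧ ab x - x ∈ C := by
  have hco : M.cut (M.ord x) x = x := M.cut_ord x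
  have hcoab : M.cut (M.ord x) (ab x) = ab x := hab.cut_abs hco
  set o := M.ord x with ho
  set J := JMat o with hJdef
  set K := KMat o with hKdef
  set K' := fstar (KMat o) with hK'def
  have hfJ : IsFin J := isFin_JMat o
  have hfK : IsFin K := isFin_KMat o
  have hfK' : IsFin K' := isFin_fstar (isFin_KMat o)
  have hKJ : fmul K J = 0 := fmul_KMat_JMat o
  have hJK' : fmul J K' = 0 := fmul_JMat_fstar_KMat o
  have hKK' : fmul K K' = J := fmul_KMat_fstar_KMat o
  have hJJ : fmul J J = J := fmul_JMat_JMat o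
  set p := ab x with hpdef
  have hrp : M.rsmul p J = p := M.rsmulJ hcoab
  have hlp : M.lsmul J p = p := M.lsmulJ hcoab
  have hrx : M.rsmul x J = x := M.rsmulJ hco
  have hlx : M.lsmul J x = x := M.lsmulJ hco
  set t2 := M.lsmul K' (M.rsmul p K) with ht2
  set t3 := M.rsmul x K with ht3
  set t4 := M.lsmul K' x with ht4
  have hB : p + t2 + (t3 + t4) ∈ C := by
    have hBmem := hab.pos_part x
    rw [hsa] at hBmem
    have heq : M.pairPlus (M.ord x) p p + M.san (M.ord x) x = p + t2 + (t3 + t4) := by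
      unfold FBimod.pairPlus FBimod.san
      rw [hsa, ← ho, ← hK'def, ← hKdef, ← hJdef,
        ← M.lsmul_rsmul J x K hfJ hfK, hlx, hrx]
    rwa [heq] at hBmem
  -- elementary products
  have h1 : M.rsmul t2 J = 0 := by
    rw [ht2, M.lsmul_rsmul K' (M.rsmul p K) J hfK' hfJ,
      ← M.rsmul_mul p K J hfK hfJ, hKJ, M.rsmul_zero_right, M.lsmul_zero_right]
  have h2 : M.rsmul t3 J = 0 := by
    rw [ht3, ← M.rsmul_mul x K J hfK hfJ, hKJ, M.rsmul_zero_right]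
  have h3 : M.rsmul t4 J = t4 := by
    rw [ht4, M.lsmul_rsmul K' x J hfK' hfJ, hrx]
  have h4 : M.rsmul p K' = 0 := by
    conv_lhs => rw [← hrp]
    rw [← M.rsmul_mul p J K' hfJ hfK', hJK', M.rsmul_zero_right]
  have h5 : M.rsmul t2 K' = M.lsmul K' p := by
    rw [ht2, M.lsmul_rsmul K' (M.rsmul p K) K' hfK' hfK',
      ← M.rsmul_mul p K K' hfK hfK', hKK', hrp]
  have h6 : M.rsmul t3 K' = x := by
    rw [ht3, ← M.rsmul_mul x K K' hfK hfK', hKK', hrx]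
  have h7 : M.rsmul t4 K' = 0 := by
    rw [ht4, M.lsmul_rsmul K' x K' hfK' hfK']
    conv_lhs => rw [← hrx]
    rw [← M.rsmul_mul x J K' hfJ hfK', hJK', M.rsmul_zero_right, M.lsmul_zero_right]
  have g1 : M.lsmul J t4 = 0 := by
    rw [ht4, ← M.mul_lsmul J K' x hfJ hfK', hJK', M.lsmul_zero_left]
  have g2 : M.lsmul J (M.lsmul K' p) = 0 := by
    rw [← M.mul_lsmul J K' p hfJ hfK', hJK', M.lsmul_zero_left]
  have g3 : M.lsmul K p = 0 := by
    conv_lhs => rw [← hlp]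
    rw [← M.mul_lsmul K J p hfK hfJ, hKJ, M.lsmul_zero_left]
  have g4 : M.lsmul K x = 0 := by
    conv_lhs => rw [← hlx]
    rw [← M.mul_lsmul K J x hfK hfJ, hKJ, M.lsmul_zero_left]
  have g5 : M.lsmul K t4 = x := by
    rw [ht4, ← M.mul_lsmul K K' x hfK hfK', hKK', hlx]
  have g6 : M.lsmul K (M.lsmul K' p) = p := by
    rw [← M.mul_lsmul K K' p hfK hfK', hKK', hlp]
  set B := p + t2 + (t3 + t4) with hBdef
  have RJ : M.rsmul B J = p + t4 := by
    rw [hBdef, M.rsmul_add, M.rsmul_add, M.rsmul_add, hrp, h1, h2, h3]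
    abel
  have RK' : M.rsmul B K' = M.lsmul K' p + x := by
    rw [hBdef, M.rsmul_add, M.rsmul_add, M.rsmul_add, h4, h5, h6, h7]
    abel
  -- the plus case
  have hfstar_plus : fstar (J + K') = J + K := by
    rw [hJdef, hK'def, hKdef, fstar_add, fstar_JMat, fstar_fstar]
  have Splus : M.conj (J + K') B = p + x + (x + p) := by
    unfold FBimod.conj
    rw [hfstar_plus, M.rsmul_add' B J K' hfJ hfK', RJ, RK',
      M.add_lsmul J K _ hfJ hfK, M.lsmul_add, M.lsmul_add, M.lsmul_add, M.lsmul_add,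
      M.lsmul_add, M.lsmul_add, hlp, g1, g2, hlx, g3, g5, g6, g4]
    abel
  have hSplus : p + x + (x + p) ∈ C := by
    rw [← Splus]
    exact hab.cone.2.2 B hB (J + K') (isFin_add hfJ hfK')
  -- the minus case
  have hfstar_minus : fstar (J - K') = J - K := by
    rw [hJdef, hK'def, hKdef, fstar_sub, fstar_JMat, fstar_fstar]
  have Sminus : M.conj (J - K') B = p - x - (x - p) := by
    unfold FBimod.conj
    rw [hfstar_minus, M.rsmul_sub' hfJ hfK', RJ, RK',
      M.sub_lsmul hfJ hfK, M.lsmul_sub, M.lsmul_sub,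
      M.lsmul_add, M.lsmul_add, M.lsmul_add, M.lsmul_add,
      hlp, g1, g2, hlx, g3, g5, g6, g4]
    abel
  have hSminus : p - x - (x - p) ∈ C := by
    rw [← Sminus]
    exact hab.cone.2.2 B hB (J - K') (isFin_sub hfJ hfK')
  have half : ∀ z : 𝕍, z + z ∈ C → z ∈ C := by
    intro z hz
    have := hab.smul_mem hz (by norm_num : (0:ℝ) ≤ 1/2)
    have heq : ((1/2 : ℝ) : ℂ) • (z + z) = z := by
      have h2 : z + z = (2 : ℂ) • z := (two_smul ℂ z).symm
      rw [h2, smul_smul]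
      norm_num
    rwa [heq] at this
  constructor
  · refine half (p + x) ?_
    have : p + x + (p + x) = p + x + (x + p) := by abel
    rw [this]
    exact hSplus
  · refine half (p - x) ?_
    have : p - x + (p - x) = p - x - (x - p) := by abel
    rw [this]
    exact hSminus

end MainLemmas

section MatrixCombinatorics

variable {V : Type*} [AddCommGroup V] [Module ℂ V]

lemma aSmul_one {n s : ℕ} (v : Matrix (Fin n) (Fin s) V) :
    aSmul (1 : Matrix (Fin n) (Fin n) ℂ) v = v := by
  funext i j
  unfold aSmul
  rw [Finset.sum_eq_single i]
  · rw [Matrix.one_apply_eq, one_smul]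
  · intro b _ hb
    rw [Matrix.one_apply_ne (Ne.symm hb), zero_smul]
  · intro hmem; exact absurd (Finset.mem_univ _) hmem

lemma dsum_split {m n : ℕ} (u : Matrix (Fin m) (Fin m) V) (v : Matrix (Fin n) (Fin n) V) :
    dsum u v = dsum u (0 : Matrix (Fin n) (Fin n) V)
      + dsum (0 : Matrix (Fin m) (Fin m) V) v := by
  funext i j
  simp only [dsum, Matrix.add_apply]
  split_ifs <;> simp

lemma smulB_padM {q p s N : ℕ} (hq : q ≤ N) (hp : p ≤ N) (hs : s ≤ N)
    (v : Matrix (Fin q) (Fin p) V) (B : Matrix (Fin p) (Fin s) ℂ) :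
    smulB (padM N N v) (padM N N B) = padM N N (smulB v B) := by
  funext i j
  unfold smulB
  by_cases hi : (i : ℕ) < q
  · by_cases hj : (j : ℕ) < s
    · have hterm : ∀ k : Fin N, padM N N B k j • padM N N v i k
          = if hk : (k : ℕ) < p then B ⟨k, hk⟩ ⟨(j : ℕ), hj⟩ • v ⟨(i : ℕ), hi⟩ ⟨k, hk⟩
            else 0 := by
        intro k
        by_cases hk : (k : ℕ) < p <;> simp [padM, hi, hj, hk]
      refine (sum_pad' hp _
        (fun x : Fin p => B x ⟨(j : ℕ), hj⟩ • v ⟨(i : ℕ), hi⟩ x) hterm).trans ?_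
      simp [padM, smulB, hi, hj]
  -- j ≥ s
    · have hterm : ∀ k : Fin N, padM N N B k j • padM N N v i k = 0 := by
        intro k
        by_cases hk : (k : ℕ) < p <;> simp [padM, hj, hk]
      rw [Finset.sum_congr rfl fun k _ => hterm k, Finset.sum_const_zero]
      simp [padM, hj]
  · have hterm : ∀ k : Fin N, padM N N B k j • padM N N v i k = 0 := by
      intro k
      by_cases hk : (k : ℕ) < p <;> simp [padM, hi, hk]
    rw [Finset.sum_congr rfl fun k _ => hterm k, Finset.sum_const_zero]
    simp [padM, hi]

lemma aSmul_padM {r p q N : ℕ} (hr : r ≤ N) (hp : p ≤ N) (hq : q ≤ N)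
    (A : Matrix (Fin r) (Fin p) ℂ) (w : Matrix (Fin p) (Fin q) V) :
    aSmul (padM N N A) (padM N N w) = padM N N (aSmul A w) := by
  funext i j
  unfold aSmul
  by_cases hi : (i : ℕ) < r
  · by_cases hj : (j : ℕ) < q
    · have hterm : ∀ k : Fin N, padM N N A i k • padM N N w k j
          = if hk : (k : ℕ) < p then A ⟨(i : ℕ), hi⟩ ⟨k, hk⟩ • w ⟨k, hk⟩ ⟨(j : ℕ), hj⟩
            else 0 := by
        intro k
        by_cases hk : (k : ℕ) < p <;> simp [padM, hi, hj, hk]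
      refine (sum_pad' hp _
        (fun x : Fin p => A ⟨(i : ℕ), hi⟩ x • w x ⟨(j : ℕ), hj⟩) hterm).trans ?_
      simp [padM, aSmul, hi, hj]
    · have hterm : ∀ k : Fin N, padM N N A i k • padM N N w k j = 0 := by
        intro k
        by_cases hk : (k : ℕ) < p <;> simp [padM, hj, hk]
      rw [Finset.sum_congr rfl fun k _ => hterm k, Finset.sum_const_zero]
      simp [padM, hj]
  · have hterm : ∀ k : Fin N, padM N N A i k • padM N N w k j = 0 := by
      intro k
      by_cases hk : (k : ℕ) < p <;> simp [padM, hi, hk]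
    rw [Finset.sum_congr rfl fun k _ => hterm k, Finset.sum_const_zero]
    simp [padM, hi]

/-- The diagonal indicator matrix of the "second block". -/
def tailD (m N : ℕ) : Matrix (Fin N) (Fin N) ℂ :=
  fun i j => if i = j ∧ m ≤ (i : ℕ) then 1 else 0

lemma tailD_compress {m n : ℕ} (v : Matrix (Fin n) (Fin n) V) :
    aSmul (tailD m (m + n)) (smulB (dsum (0 : Matrix (Fin m) (Fin m) V) v)
      (tailD m (m + n))) = dsum (0 : Matrix (Fin m) (Fin m) V) v := by
  have hsmulB : ∀ (z : Matrix (Fin (m + n)) (Fin (m + n)) V) (i j : Fin (m + n)),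
      smulB z (tailD m (m + n)) i j = if m ≤ (j : ℕ) then z i j else 0 := by
    intro z i j
    unfold smulB
    rw [Finset.sum_eq_single j]
    · unfold tailD
      by_cases hj : m ≤ (j : ℕ)
      · rw [if_pos ⟨rfl, hj⟩, one_smul, if_pos hj]
      · rw [if_neg (by tauto), zero_smul, if_neg hj]
    · intro b _ hb
      unfold tailD
      rw [if_neg (by rintro ⟨h1, -⟩; exact hb h1), zero_smul]
    · intro hmem; exact absurd (Finset.mem_univ _) hmem
  have haSmul : ∀ (w : Matrix (Fin (m + n)) (Fin (m + n)) V) (i j : Fin (m + n)),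
      aSmul (tailD m (m + n)) w i j = if m ≤ (i : ℕ) then w i j else 0 := by
    intro w i j
    unfold aSmul
    rw [Finset.sum_eq_single i]
    · unfold tailD
      by_cases hi : m ≤ (i : ℕ)
      · rw [if_pos ⟨rfl, hi⟩, one_smul, if_pos hi]
      · rw [if_neg (by tauto), zero_smul, if_neg hi]
    · intro b _ hb
      unfold tailD
      rw [if_neg (by rintro ⟨h1, -⟩; exact hb h1.symm), zero_smul]
    · intro hmem; exact absurd (Finset.mem_univ _) hmem
  funext i j
  rw [haSmul]
  by_cases hi : m ≤ (i : ℕ)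
  · rw [if_pos hi, hsmulB]
    by_cases hj : m ≤ (j : ℕ)
    · rw [if_pos hj]
    · rw [if_neg hj]
      simp only [dsum]
      rw [dif_neg (by omega : ¬ ((i : ℕ) < m)), dif_pos (by omega : (j : ℕ) < m)]
  · rw [if_neg hi]
    simp only [dsum]
    rw [dif_pos (by omega : (i : ℕ) < m)]
    split_ifs <;> simp

/-- The cyclic "block swap" permutation of `Fin (m + n)` sending the first `n`
indices to the last `n` positions. -/
def shiftE (m n : ℕ) : Equiv.Perm (Fin (m + n)) where
  toFun k := ⟨if (k : ℕ) < n then (k : ℕ) + m else (k : ℕ) - n,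
    by have := k.isLt; split_ifs <;> omega⟩
  invFun k := ⟨if (k : ℕ) < m then (k : ℕ) + n else (k : ℕ) - m,
    by have := k.isLt; split_ifs <;> omega⟩
  left_inv k := by
    ext
    simp only
    have := k.isLt
    split_ifs <;> omega
  right_inv k := by
    ext
    simp only
    have := k.isLt
    split_ifs <;> omega

/-- The permutation matrix of `shiftE`. -/
def shiftMat (m n : ℕ) : Matrix (Fin (m + n)) (Fin (m + n)) ℂ :=
  fun i j => if j = shiftE m n i then 1 else 0

lemma shiftMat_unitary (m n : ℕ) :
    (shiftMat m n).conjTranspose * shiftMat m n = 1 := by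
  ext i j
  rw [Matrix.mul_apply, Finset.sum_eq_single ((shiftE m n).symm i)]
  · simp only [Matrix.conjTranspose_apply, shiftMat, Equiv.apply_symm_apply,
      Matrix.one_apply]
    rw [if_pos trivial, star_one, one_mul]
    by_cases hij : i = j
    · subst hij; rw [if_pos rfl]
    · rw [if_neg (fun h => hij h.symm), if_neg hij]
  · intro b _ hb
    simp only [Matrix.conjTranspose_apply, shiftMat]
    rw [if_neg (fun h => hb ((Equiv.symm_apply_eq _).mpr h).symm), star_zero, zero_mul]
  · intro hmem; exact absurd (Finset.mem_univ _) hmem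

lemma shift_conj_apply {m n : ℕ} (z : Matrix (Fin (m + n)) (Fin (m + n)) V) :
    aSmul (shiftMat m n).conjTranspose (smulB z (shiftMat m n))
      = fun i j => z ((shiftE m n).symm i) ((shiftE m n).symm j) := by
  funext i j
  unfold aSmul smulB
  have hinner : ∀ k, (∑ l, shiftMat m n l j • z k l) = z k ((shiftE m n).symm j) := by
    intro k
    rw [Finset.sum_eq_single ((shiftE m n).symm j)]
    · simp [shiftMat]
    · intro b _ hb
      simp only [shiftMat]
      rw [if_neg (fun h => hb ((Equiv.symm_apply_eq _).mpr h).symm), zero_smul]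
    · intro hmem; exact absurd (Finset.mem_univ _) hmem
  rw [Finset.sum_congr rfl fun k _ => by rw [hinner k]]
  rw [Finset.sum_eq_single ((shiftE m n).symm i)]
  · simp [shiftMat]
  · intro b _ hb
    simp only [Matrix.conjTranspose_apply, shiftMat]
    rw [if_neg (fun h => hb ((Equiv.symm_apply_eq _).mpr h).symm), star_zero, zero_smul]
  · intro hmem; exact absurd (Finset.mem_univ _) hmem

lemma shiftE_symm_val {m n : ℕ} (i : Fin (m + n)) :
    (((shiftE m n).symm i : Fin (m + n)) : ℕ)
      = if (i : ℕ) < m then (i : ℕ) + n else (i : ℕ) - m := rfl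

lemma padM_shift {m n : ℕ} (v : Matrix (Fin n) (Fin n) V) :
    (fun i j => padM (m + n) (m + n) v ((shiftE m n).symm i) ((shiftE m n).symm j))
      = dsum (0 : Matrix (Fin m) (Fin m) V) v := by
  funext i j
  have hsi := shiftE_symm_val (m := m) (n := n) i
  have hsj := shiftE_symm_val (m := m) (n := n) j
  by_cases hi : (i : ℕ) < m
  · have h1 : ¬ (((shiftE m n).symm i) : ℕ) < n := by rw [hsi, if_pos hi]; omega
    simp only [padM, dsum]
    rw [dif_neg h1, dif_pos hi]
    split_ifs <;> simp
  · have h1 : (((shiftE m n).symm i) : ℕ) < n := by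
      rw [hsi, if_neg hi]; have := i.isLt; omega
    by_cases hj : (j : ℕ) < m
    · have h2 : ¬ (((shiftE m n).symm j) : ℕ) < n := by rw [hsj, if_pos hj]; omega
      simp only [padM, dsum]
      rw [dif_pos h1, dif_neg h2, dif_neg hi, dif_pos hj]
    · have h2 : (((shiftE m n).symm j) : ℕ) < n := by
        rw [hsj, if_neg hj]; have := j.isLt; omega
      simp only [padM, dsum]
      rw [dif_pos h1, dif_pos h2, dif_neg hi, dif_neg hj]
      exact congrArg₂ v (Fin.ext (by rw [hsi, if_neg hi]))
        (Fin.ext (by rw [hsj, if_neg hj]))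

end MatrixCombinatorics

end Statement6Aux

/-- Conversely, a non-degenerate absolutely ordered `𝔉`-bimodule
`(𝔙, 𝔙⁺, |·|)` induces, on the matrix ordered space `V` with `Mₙ(V)⁺ = Tₙ⁻¹(𝔍ₙ𝔙⁺𝔍ₙ)`
and `|v|ₙ := Tₙ⁻¹(|Tₙ(v)|)`, an absolutely matrix ordered space structure; in
particular `|u ⊕ v|_{m+n} = |u|_m ⊕ |v|ₙ`. -/
theorem statement6 {V 𝕍 : Type*} [AddCommGroup V] [Module ℂ V] [StarAddMonoid V]
    [StarModule ℂ V] [AddCommGroup 𝕍] [Module ℂ 𝕍] (M : FBimod 𝕍) (C : Set 𝕍)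
    (ab : 𝕍 → 𝕍) (hab : M.IsAbsOrd C ab)
    (T : ∀ n : ℕ, Matrix (Fin n) (Fin n) V → 𝕍) (hT : IsMatLimit V M T)
    (absV : ∀ n : ℕ, Matrix (Fin n) (Fin n) V → Matrix (Fin n) (Fin n) V)
    (habsV : ∀ (n : ℕ) (v : Matrix (Fin n) (Fin n) V), T n (absV n v) = ab (T n v)) :
    (∀ (m n : ℕ) (u : Matrix (Fin m) (Fin m) V) (v : Matrix (Fin n) (Fin n) V),
      absV (m + n) (dsum u v) = dsum (absV m u) (absV n v)) ∧
      IsAbsMatOrderedSq (fun n => {v : Matrix (Fin n) (Fin n) V | T n v ∈ C}) absV := by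
  -- the direct-sum property of the absolute values
  have habs_dsum : ∀ (m n : ℕ) (u : Matrix (Fin m) (Fin m) V)
      (v : Matrix (Fin n) (Fin n) V),
      absV (m + n) (dsum u v) = dsum (absV m u) (absV n v) := by
    intro m n u v
    apply hT.inj (m + n)
    rw [habsV]
    have hU : T (m + n) (dsum u (0 : Matrix (Fin n) (Fin n) V)) = T m u := hT.embed m n u
    have hJdiag : finsetDiag (Finset.range m) = JMat m := by
      funext k l
      simp only [finsetDiag, JMat, Finset.mem_range]
    have hDdiag : finsetDiag (Finset.Ico m (m + n)) = embC (tailD m (m + n)) := by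
      funext k l
      simp only [finsetDiag, embC, tailD, Finset.mem_Ico, Fin.mk.injEq]
      split_ifs <;> first | rfl | (exfalso; omega)
    have hindep : M.FIndep (T m u)
        (T (m + n) (dsum (0 : Matrix (Fin m) (Fin m) V) v)) := by
      refine ⟨Finset.range m, Finset.Ico m (m + n), ?_, ?_, ?_⟩
      · rw [Finset.disjoint_left]
        intro x hx hx'
        simp only [Finset.mem_range] at hx
        simp only [Finset.mem_Ico] at hx'
        omega
      · rw [hJdiag]
        exact hT.cutT m u
      · rw [hDdiag]
        have h := hT.act (m + n) (tailD m (m + n)) (tailD m (m + n))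
          (dsum (0 : Matrix (Fin m) (Fin m) V) v)
        rw [tailD_compress] at h
        exact h.symm
    have hTsum : T (m + n) (dsum u v)
        = T m u + T (m + n) (dsum (0 : Matrix (Fin m) (Fin m) V) v) := by
      rw [dsum_split, hT.map_add, hU]
    have hconjshift : ∀ w : Matrix (Fin n) (Fin n) V,
        M.conj (embC (shiftMat m n)) (T (m + n) (padM (m + n) (m + n) w))
          = T (m + n) (dsum (0 : Matrix (Fin m) (Fin m) V) w) := by
      intro w
      unfold FBimod.conj
      rw [fstar_embC,
        ← hT.act (m + n) (shiftMat m n).conjTranspose (shiftMat m n)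
          (padM (m + n) (m + n) w),
        shift_conj_apply, padM_shift]
    have habW : ab (T (m + n) (dsum (0 : Matrix (Fin m) (Fin m) V) v))
        = T (m + n) (dsum (0 : Matrix (Fin m) (Fin m) V) (absV n v)) := by
      have h2 : ab (T (m + n) (padM (m + n) (m + n) v))
          = T (m + n) (padM (m + n) (m + n) (absV n v)) := by
        rw [hT.T_padM (Nat.le_add_left n m) v,
          hT.T_padM (Nat.le_add_left n m) (absV n v), habsV]
      rw [← hconjshift v,
        hab.conjInv (shiftMat m n) (shiftMat_unitary m n) _ (hT.cutT (m + n) _),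
        h2, hconjshift (absV n v)]
    calc ab (T (m + n) (dsum u v))
        = ab (T m u + T (m + n) (dsum (0 : Matrix (Fin m) (Fin m) V) v)) := by
          rw [hTsum]
      _ = ab (T m u) + ab (T (m + n) (dsum (0 : Matrix (Fin m) (Fin m) V) v)) :=
          hab.indep_add _ _ hindep
      _ = T m (absV m u) + T (m + n) (dsum (0 : Matrix (Fin m) (Fin m) V) (absV n v)) := by
          rw [habsV m u, habW]
      _ = T (m + n) (dsum (absV m u) (0 : Matrix (Fin n) (Fin n) V))
            + T (m + n) (dsum (0 : Matrix (Fin m) (Fin m) V) (absV n v)) := by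
          rw [hT.embed m n (absV m u)]
      _ = T (m + n) (dsum (absV m u) (absV n v)) := by
          rw [← hT.map_add, ← dsum_split]
  refine ⟨habs_dsum, ?_⟩
  constructor
  -- pos_star
  · intro n v hv
    apply hT.inj n
    rw [← hT.map_star]
    exact hab.cone.1 _ hv
  -- pos_add
  · intro n u hu v hv
    show T n (u + v) ∈ C
    rw [hT.map_add]
    exact hab.cone.2.1 _ hu _ hv
  -- pos_conj
  · intro m n a v hv
    show T m (aSmul a.conjTranspose (smulB v a)) ∈ C
    have hmN : m ≤ m + n := Nat.le_add_right m n
    have hnN : n ≤ m + n := Nat.le_add_left n m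
    have hTm : T m (aSmul a.conjTranspose (smulB v a))
        = M.conj (embC a) (T n v) := by
      rw [← hT.T_padM hmN (aSmul a.conjTranspose (smulB v a)),
        ← aSmul_padM hmN hnN hmN a.conjTranspose (smulB v a),
        ← smulB_padM hnN hnN hmN v a,
        hT.act (m + n) (padM (m + n) (m + n) a.conjTranspose)
          (padM (m + n) (m + n) a) (padM (m + n) (m + n) v),
        embC_padM hmN hnN a.conjTranspose, embC_padM hnN hmN a,
        hT.T_padM hnN v]
      unfold FBimod.conj
      rw [fstar_embC]
    rw [hTm]
    exact hab.cone.2.2 _ hv (embC a) (isFin_embC a)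
  -- abs_mem
  · intro n v
    show T n (absV n v) ∈ C
    rw [habsV]
    exact hab.abs_mem _
  -- abs_of_pos
  · intro n v hv
    apply hT.inj n
    rw [habsV]
    exact hab.abs_of_mem _ hv
  -- abs_add_self
  · intro n v hsv
    have hsa : M.star (T n v) = T n v := by rw [hT.map_star, hsv]
    have h := hab.abs_add_self_V (T n v) hsa
    constructor
    · show T n (absV n v + v) ∈ C
      rw [hT.map_add, habsV]
      exact h.1
    · show T n (absV n v - v) ∈ C
      rw [hT.T_sub, habsV]
      exact h.2
  -- abs_real_smul
  · intro n k v hsv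
    apply hT.inj n
    rw [habsV, hT.map_smul, hT.map_smul, habsV]
    exact hab.abs_real_smul_V (hT.cutT n v) k
  -- absorb
  · intro n u hu v hv w hw h1 h2
    have h1' : ab (T n u - T n v) = T n u + T n v := by
      rw [← hT.T_sub, ← hT.map_add, ← habsV, h1]
    have h2' : T n v - T n w ∈ C := by
      rw [← hT.T_sub]
      exact h2
    have := hab.absorb (T n u) hu (T n v) hv (T n w) hw h1' h2'
    apply hT.inj n
    rw [habsV, hT.T_sub, hT.map_add]
    exact this
  -- ortho_pm
  · intro n u hu v hv w hw h1 h2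
    have h1' : ab (T n u - T n v) = T n u + T n v := by
      rw [← hT.T_sub, ← hT.map_add, ← habsV, h1]
    have h2' : ab (T n u - T n w) = T n u + T n w := by
      rw [← hT.T_sub, ← hT.map_add, ← habsV, h2]
    have h := hab.ortho_pm (T n u) hu (T n v) hv (T n w) hw h1' h2'
    have hvw : T n (absV n (v + w)) = ab (T n v + T n w) := by
      rw [habsV, hT.map_add]
    have hvw' : T n (absV n (v - w)) = ab (T n v - T n w) := by
      rw [habsV, hT.T_sub]
    constructor
    · apply hT.inj n
      rw [habsV, hT.T_sub, hT.map_add, hvw]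
      exact h.1
    · apply hT.inj n
      rw [habsV, hT.T_sub, hT.map_add, hvw']
      exact h.2
  -- abs_smul_le
  · intro n α β v
    show ((cnorm α : ℂ) • absV n (smulB (absV n v) β)
        - absV n (aSmul α (smulB v β))) ∈ {v : Matrix (Fin n) (Fin n) V | T n v ∈ C}
    show T n ((cnorm α : ℂ) • absV n (smulB (absV n v) β)
        - absV n (aSmul α (smulB v β))) ∈ C
    rw [hT.T_sub, hT.map_smul]
    have e1 : T n (smulB (absV n v) β)
        = M.rsmul (T n (absV n v)) (embC β) := by
      have h := hT.act n 1 β (absV n v)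
      rw [aSmul_one] at h
      rw [h, embC_one, ← M.lsmul_rsmul (JMat n) (T n (absV n v)) (embC β)
        (isFin_JMat n) (isFin_embC β), M.lsmulJ (hT.cutT n (absV n v))]
    have e2 : T n (aSmul α (smulB v β))
        = M.lsmul (embC α) (M.rsmul (T n v) (embC β)) := hT.act n α β v
    have h := hab.abs_smul_le (embC α) (embC β) (isFin_embC α) (isFin_embC β) (T n v)
    rw [fnorm_embC] at h
    rw [habsV n (smulB (absV n v) β), e1, habsV n (aSmul α (smulB v β)), e2, habsV n v]
    exact h
  -- abs_dsum
  · exact habs_dsum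
end
end
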